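/- arXiv:1105.3053 — 3 statements merged into one kernel-verified Lean document; each statement's English description precedes it below -/
import Mathlib

section
/- Let ξ₁,…,ξ_k (k > d) be vectors in ℝ^d in general position ((i): no d linearly dependent; (ii): no ω with ⟨ω,ξᵢ⟩ > 0 for all i). Let g : ℝ^d → ℝ be a non-negative Lipschitz function having directional derivatives D_y g(x) at every point x in every direction y, such that for every subfamily {ξᵢ : i∈I} not satisfying (ii) one can choose ω with ⟨ω,ξᵢ⟩ > 0 for all i∈I and ⟨ξᵢ,ω⟩ > D_ω g(γ) for all i∈I and all γ ∈ ℝ^d. Then for any real numbers f(ξ₁),…,f(ξ_k), the minimum over γ ∈ ℝ^d of max_i [f(ξᵢ) − ⟨ξᵢ,γ⟩ + g(γ)] is finite, is attained at some γ₀, and equals max_I [𝔼_I f(ξ) + g(γ_I)], where the max is over subsets I of size d+1 whose convex hull contains 0 in its interior, 𝔼_I is the expectation under the unique risk-neutral probability on {ξᵢ : i∈I}, and γ_I is the corresponding unique optimal γ for the unperturbed problem on {ξᵢ : i∈I}. In particular, for k = d+1 the minimizer γ₀ coincides with the minimizer for g = 0 and the value equals the unperturbed value plus g(γ₀). -/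
noncomputable section

/-- Standard inner product on ℝ^d. -/
def dotp {d : ℕ} (u v : Fin d → ℝ) : ℝ := ∑ i, u i * v i

/-- Euclidean norm on ℝ^d. -/
def euclNorm {d : ℕ} (u : Fin d → ℝ) : ℝ := Real.sqrt (∑ i, (u i) ^ 2)

namespace Stmt11Aux

variable {d : ℕ}

lemma dotp_comm (u v : Fin d → ℝ) : dotp u v = dotp v u := by
  simp [dotp, mul_comm]

lemma dotp_add_right (u v w : Fin d → ℝ) : dotp u (v + w) = dotp u v + dotp u w := by
  simp [dotp, mul_add, Finset.sum_add_distrib]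

lemma dotp_sub_right (u v w : Fin d → ℝ) : dotp u (v - w) = dotp u v - dotp u w := by
  simp [dotp, mul_sub, Finset.sum_sub_distrib]

lemma dotp_smul_right (u : Fin d → ℝ) (c : ℝ) (v : Fin d → ℝ) :
    dotp u (c • v) = c * dotp u v := by
  simp only [dotp, Pi.smul_apply, smul_eq_mul, Finset.mul_sum]
  exact Finset.sum_congr rfl fun i _ => by ring

lemma dotp_smul_left (u : Fin d → ℝ) (c : ℝ) (v : Fin d → ℝ) :
    dotp (c • u) v = c * dotp u v := by
  simp only [dotp, Pi.smul_apply, smul_eq_mul, Finset.mul_sum]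
  exact Finset.sum_congr rfl fun i _ => by ring

lemma dotp_zero_right (u : Fin d → ℝ) : dotp u 0 = 0 := by simp [dotp]

lemma dotp_zero_left (u : Fin d → ℝ) : dotp 0 u = 0 := by simp [dotp]

lemma dotp_sum_left {ι : Type*} (s : Finset ι) (w : ι → ℝ) (ξ : ι → Fin d → ℝ)
    (v : Fin d → ℝ) :
    dotp (∑ i ∈ s, w i • ξ i) v = ∑ i ∈ s, w i * dotp (ξ i) v := by
  classical
  induction s using Finset.induction with
  | empty => simp [dotp]
  | insert _ _ hx ih =>
      rw [Finset.sum_insert hx, Finset.sum_insert hx, ← ih, dotp_comm, dotp_add_right,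
        dotp_comm v, dotp_smul_left, dotp_comm v]

lemma dotp_self_nonneg (u : Fin d → ℝ) : 0 ≤ dotp u u :=
  Finset.sum_nonneg fun i _ => mul_self_nonneg _

lemma eq_zero_of_dotp_self (u : Fin d → ℝ) (h : dotp u u = 0) : u = 0 := by
  funext i
  have h2 : ∀ j ∈ Finset.univ, 0 ≤ u j * u j := fun j _ => mul_self_nonneg _
  have := (Finset.sum_eq_zero_iff_of_nonneg h2).1 h i (Finset.mem_univ i)
  have := mul_self_eq_zero.1 this
  simpa using this

lemma continuous_dotp_right (u : Fin d → ℝ) : Continuous fun v => dotp u v := by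
  unfold dotp
  exact continuous_finset_sum _ fun i _ =>
    (continuous_const.mul ((continuous_apply i)))

/-- Any linear functional on `Fin d → ℝ` is represented by `dotp ω`. -/
lemma repr_functional (φ : (Fin d → ℝ) →ₗ[ℝ] ℝ) :
    ∃ ω : Fin d → ℝ, ∀ v, φ v = dotp ω v := by
  classical
  refine ⟨fun i => φ (fun j => if i = j then 1 else 0), fun v => ?_⟩
  conv_lhs => rw [pi_eq_sum_univ v]
  rw [map_sum]
  simp only [map_smul, smul_eq_mul, dotp]
  exact Finset.sum_congr rfl fun i _ => by ring

lemma indep_subset {k : ℕ} (ξ : Fin k → Fin d → ℝ) {s t : Finset (Fin k)} (hst : s ⊆ t)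
    (ht : LinearIndependent ℝ (fun i : t => ξ i)) :
    LinearIndependent ℝ (fun i : s => ξ i) := by
  have := ht.comp (fun i : s => (⟨i.1, hst i.2⟩ : t))
    (fun a b hab => Subtype.ext (by simpa using congrArg Subtype.val hab))
  exact this

lemma indep_small {k : ℕ} (hk : d < k) (ξ : Fin k → Fin d → ℝ)
    (hi : ∀ s : Finset (Fin k), s.card = d → LinearIndependent ℝ (fun i : s => ξ i))
    (s : Finset (Fin k)) (hs : s.card ≤ d) : LinearIndependent ℝ (fun i : s => ξ i) := by
  obtain ⟨t, hst, htc⟩ := Finset.exists_superset_card_eq hs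
    (by simpa using hk.le)
  exact indep_subset ξ hst (hi t htc)

lemma dual_pos {ι : Type*} [Fintype ι] (v : ι → Fin d → ℝ)
    (hv : LinearIndependent ℝ v) : ∃ ω : Fin d → ℝ, ∀ i, 0 < dotp ω (v i) := by
  classical
  have h1 : LinearIndepOn ℝ id (Set.range v) := hv.linearIndepOn_id
  let b : Module.Basis _ ℝ (Fin d → ℝ) := Module.Basis.extend h1
  haveI : Fintype (h1.extend (Set.subset_univ _)) := FiniteDimensional.fintypeBasisIndex b
  let φ : (Fin d → ℝ) →ₗ[ℝ] ℝ := ∑ j, b.coord j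
  obtain ⟨ω, hω⟩ := repr_functional φ
  refine ⟨ω, fun i => ?_⟩
  have hmem : v i ∈ h1.extend (Set.subset_univ _) := h1.subset_extend _ ⟨i, rfl⟩
  have hφ : φ (v i) = 1 := by
    simp only [φ, LinearMap.sum_apply, Module.Basis.coord_apply]
    rw [show v i = b ⟨v i, hmem⟩ from (Module.Basis.extend_apply_self h1 ⟨v i, hmem⟩).symm]
    simp only [Module.Basis.repr_self]
    rw [Finset.sum_eq_single (⟨v i, hmem⟩ : h1.extend (Set.subset_univ _))]
    · simp
    · intro j _ hj; simp [Finsupp.single_apply, Ne.symm hj]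
    · intro h; exact absurd (Finset.mem_univ _) h
  rw [← hω]; rw [hφ]; norm_num

lemma g_continuous (g : (Fin d → ℝ) → ℝ) (C : ℝ)
    (hgLip : ∀ x y, |g x - g y| ≤ C * euclNorm (x - y)) : Continuous g := by
  rw [continuous_iff_continuousAt]
  intro x
  have he : Continuous fun y : Fin d → ℝ => C * euclNorm (x - y) := by
    apply continuous_const.mul
    unfold euclNorm
    exact Real.continuous_sqrt.comp (continuous_finset_sum _ fun i _ =>
      (((continuous_apply i).comp (continuous_const.sub continuous_id)).pow 2))
  have hx0 : (fun y : Fin d → ℝ => C * euclNorm (x - y)) x = 0 := by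
    simp [euclNorm]
  have h1 : Filter.Tendsto (fun y => g x - g y) (nhds x) (nhds 0) := by
    apply squeeze_zero_norm (fun y => hgLip x y)
    rw [show (0:ℝ) = C * euclNorm (x - x) by simp [euclNorm]]
    exact he.continuousAt
  have h2 : Filter.Tendsto (fun y => g x - (g x - g y)) (nhds x) (nhds (g x - 0)) :=
    Filter.Tendsto.const_sub _ h1
  exact (by simpa using h2 : Filter.Tendsto g (nhds x) (nhds (g x)))

lemma exists_min {k : ℕ} (hd : 0 < d) (ξ : Fin k → Fin d → ℝ) (f : Fin k → ℝ)
    (g : (Fin d → ℝ) → ℝ) (hg0 : ∀ x, 0 ≤ g x) (hgc : Continuous g)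
    (s : Finset (Fin k)) (hs : s.Nonempty)
    (P : ∀ ω : Fin d → ℝ, ω ≠ 0 → ∃ i ∈ s, dotp (ξ i) ω < 0) :
    ∃ γ₀ : Fin d → ℝ, ∀ γ,
      (s.sup' hs fun i => f i - dotp (ξ i) γ₀) + g γ₀ ≤
      (s.sup' hs fun i => f i - dotp (ξ i) γ) + g γ := by
  classical
  haveI : Nonempty (Fin d) := ⟨⟨0, hd⟩⟩
  set Fs : (Fin d → ℝ) → ℝ := fun γ => (s.sup' hs fun i => f i - dotp (ξ i) γ) + g γ with hFs
  have hFscont : Continuous Fs := by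
    apply Continuous.add _ hgc
    exact Continuous.finset_sup'_apply hs fun i _ =>
      continuous_const.sub (continuous_dotp_right (ξ i))
  -- minimum of the "coercivity gauge" on the sphere
  set φ : (Fin d → ℝ) → ℝ := fun ω => s.sup' hs fun i => -dotp (ξ i) ω with hφ
  have hφcont : Continuous φ :=
    Continuous.finset_sup'_apply hs fun i _ => (continuous_dotp_right (ξ i)).neg
  have hsph : (Metric.sphere (0 : Fin d → ℝ) 1).Nonempty :=
    NormedSpace.sphere_nonempty.2 zero_le_one
  obtain ⟨ω₀, hω₀mem, hω₀min⟩ :=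
    (isCompact_sphere (0 : Fin d → ℝ) 1).exists_isMinOn hsph hφcont.continuousOn
  set c : ℝ := φ ω₀ with hc
  have hω₀ : ‖ω₀‖ = 1 := by simpa using hω₀mem
  have hcpos : 0 < c := by
    obtain ⟨i, his, hilt⟩ := P ω₀ (fun h => by simp [h] at hω₀)
    calc (0:ℝ) < -dotp (ξ i) ω₀ := by linarith
    _ ≤ c := Finset.le_sup' (fun i => -dotp (ξ i) ω₀) his
  -- coercivity bound
  have hkey : ∀ γ : Fin d → ℝ, c * ‖γ‖ ≤ s.sup' hs fun i => -dotp (ξ i) γ := by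
    intro γ
    rcases eq_or_ne γ 0 with rfl | hγ
    · obtain ⟨i, his⟩ := hs
      simp only [norm_zero, mul_zero]
      calc (0:ℝ) = -dotp (ξ i) 0 := by rw [dotp_zero_right]; ring
      _ ≤ _ := Finset.le_sup' (fun i => -dotp (ξ i) 0) his
    · set u : Fin d → ℝ := ‖γ‖⁻¹ • γ with hu
      have hγn : (0:ℝ) < ‖γ‖ := norm_pos_iff.2 hγ
      have hun : u ∈ Metric.sphere (0 : Fin d → ℝ) 1 := by
        simp [hu, norm_smul, abs_of_nonneg (inv_nonneg.2 hγn.le),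
          inv_mul_cancel₀ hγn.ne']
      have h1 : c ≤ φ u := hω₀min hun
      obtain ⟨i, his, hiu⟩ := Finset.exists_mem_eq_sup' hs fun i => -dotp (ξ i) u
      have hγu : γ = ‖γ‖ • u := by
        rw [hu, smul_smul, mul_inv_cancel₀ hγn.ne', one_smul]
      have heq : -dotp (ξ i) γ = ‖γ‖ * (-dotp (ξ i) u) := by
        conv_lhs => rw [hγu]
        rw [dotp_smul_right]; ring
      have h1' : c ≤ -dotp (ξ i) u := le_trans h1 (le_of_eq hiu)
      calc c * ‖γ‖ ≤ (-dotp (ξ i) u) * ‖γ‖ :=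
            mul_le_mul_of_nonneg_right h1' hγn.le
      _ = -dotp (ξ i) γ := by rw [heq]; ring
      _ ≤ _ := Finset.le_sup' (fun i => -dotp (ξ i) γ) his
  set m : ℝ := s.inf' hs f with hm
  have hlow : ∀ γ : Fin d → ℝ, m + c * ‖γ‖ ≤ Fs γ := by
    intro γ
    obtain ⟨i, his, hiγ⟩ := Finset.exists_mem_eq_sup' hs fun i => -dotp (ξ i) γ
    have h1 : m + c * ‖γ‖ ≤ f i - dotp (ξ i) γ := by
      have h2 : c * ‖γ‖ ≤ -dotp (ξ i) γ := by rw [← hiγ]; exact hkey γ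
      have h3 : m ≤ f i := Finset.inf'_le _ his
      linarith
    calc m + c * ‖γ‖ ≤ f i - dotp (ξ i) γ := h1
    _ ≤ s.sup' hs fun i => f i - dotp (ξ i) γ :=
        Finset.le_sup' (fun i => f i - dotp (ξ i) γ) his
    _ ≤ Fs γ := le_add_of_nonneg_right (hg0 γ)
  set R : ℝ := (Fs 0 - m) / c + 1 with hR
  have hR0 : 0 ≤ R := by
    have := hlow 0
    simp only [norm_zero, mul_zero, add_zero] at this
    have : 0 ≤ Fs 0 - m := by linarith
    positivity
  obtain ⟨γ₀, hγ₀mem, hγ₀min⟩ := (isCompact_closedBall (0 : Fin d → ℝ) R).exists_isMinOn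
    ⟨0, by simpa using hR0⟩ hFscont.continuousOn
  refine ⟨γ₀, fun γ => ?_⟩
  show Fs γ₀ ≤ Fs γ
  rcases le_or_gt ‖γ‖ R with hγR | hγR
  · exact hγ₀min (by simpa using hγR)
  · have h1 : Fs 0 < m + c * ‖γ‖ := by
      have h2 : c * R < c * ‖γ‖ := by
        apply mul_lt_mul_of_pos_left hγR hcpos
      have h3 : c * R = Fs 0 - m + c := by
        rw [hR, mul_add, mul_one, mul_div_assoc', mul_comm c, mul_div_assoc, div_self hcpos.ne',
          mul_one]
      linarith
    have h4 : Fs γ₀ ≤ Fs 0 := hγ₀min (by simpa using hR0)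
    have h5 := hlow γ
    linarith

lemma descent {k : ℕ} (ξ : Fin k → Fin d → ℝ) (f : Fin k → ℝ)
    (g : (Fin d → ℝ) → ℝ) (Dg : (Fin d → ℝ) → (Fin d → ℝ) → ℝ)
    (hDg : ∀ x y, Filter.Tendsto (fun ε : ℝ => (g (x + ε • y) - g x) / ε)
      (nhdsWithin 0 (Set.Ioi 0)) (nhds (Dg x y)))
    (s : Finset (Fin k)) (hs : s.Nonempty) (γ ω : Fin d → ℝ)
    (hsep : ∀ i ∈ s, f i - dotp (ξ i) γ = s.sup' hs (fun j => f j - dotp (ξ j) γ) →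
      Dg γ ω < dotp (ξ i) ω) :
    ∃ γ' : Fin d → ℝ, (s.sup' hs fun i => f i - dotp (ξ i) γ') + g γ' <
      (s.sup' hs fun i => f i - dotp (ξ i) γ) + g γ := by
  classical
  set M := s.sup' hs (fun j => f j - dotp (ξ j) γ) with hM
  set A := s.filter (fun i => f i - dotp (ξ i) γ = M) with hA
  have hAne : A.Nonempty := by
    obtain ⟨i, his, hieq⟩ := Finset.exists_mem_eq_sup' hs (fun j => f j - dotp (ξ j) γ)
    exact ⟨i, Finset.mem_filter.2 ⟨his, hieq.symm⟩⟩
  set δ := A.inf' hAne (fun i => dotp (ξ i) ω) with hδ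
  have hDδ : Dg γ ω < δ := by
    obtain ⟨i, hiA, hieq⟩ := Finset.exists_mem_eq_inf' hAne (fun i => dotp (ξ i) ω)
    rw [hδ, hieq]
    exact hsep i (Finset.mem_filter.1 hiA).1 (Finset.mem_filter.1 hiA).2
  set h : Fin k → ℝ := fun i => if f i - dotp (ξ i) γ = M then 1
    else (M - (f i - dotp (ξ i) γ)) / (|δ - dotp (ξ i) ω| + 1) with hh
  have hhpos : ∀ i ∈ s, 0 < h i := by
    intro i his
    by_cases hact : f i - dotp (ξ i) γ = M
    · simp [hh, hact]
    · have hlt : f i - dotp (ξ i) γ < M :=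
        lt_of_le_of_ne (Finset.le_sup' (fun j => f j - dotp (ξ j) γ) his) hact
      simp only [hh, hact, if_false]
      have : 0 < M - (f i - dotp (ξ i) γ) := by linarith
      positivity
  have hev : ∀ᶠ ε in nhdsWithin (0:ℝ) (Set.Ioi 0),
      (g (γ + ε • ω) - g γ) / ε < δ :=
    Filter.Tendsto.eventually_lt_const hDδ (hDg γ ω)
  obtain ⟨u, hu, huo⟩ := mem_nhdsGT_iff_exists_Ioo_subset.1 hev
  have hu0 : (0:ℝ) < u := hu
  set ε := min (u/2) (s.inf' hs h) with hε
  have hε0 : 0 < ε := by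
    apply lt_min (by linarith)
    exact (Finset.lt_inf'_iff hs).2 hhpos
  have hεu : ε < u := lt_of_le_of_lt (min_le_left _ _) (by linarith)
  have hq : (g (γ + ε • ω) - g γ) / ε < δ := huo ⟨hε0, hεu⟩
  have hgd : g (γ + ε • ω) - g γ < ε * δ := by
    rw [div_lt_iff₀ hε0] at hq; linarith [hq]
  refine ⟨γ + ε • ω, ?_⟩
  have hsup : (s.sup' hs fun i => f i - dotp (ξ i) (γ + ε • ω)) <
      M + g γ - g (γ + ε • ω) := by
    rw [Finset.sup'_lt_iff]
    intro i his
    rw [dotp_add_right, dotp_smul_right]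
    by_cases hact : f i - dotp (ξ i) γ = M
    · have hδle : δ ≤ dotp (ξ i) ω :=
        Finset.inf'_le _ (Finset.mem_filter.2 ⟨his, hact⟩)
      have : ε * δ ≤ ε * dotp (ξ i) ω := mul_le_mul_of_nonneg_left hδle hε0.le
      linarith
    · have hlt : f i - dotp (ξ i) γ < M :=
        lt_of_le_of_ne (Finset.le_sup' (fun j => f j - dotp (ξ j) γ) his) hact
      have hεh : ε ≤ h i := le_trans (min_le_right _ _) (Finset.inf'_le _ his)
      have hhi : h i = (M - (f i - dotp (ξ i) γ)) / (|δ - dotp (ξ i) ω| + 1) := by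
        simp only [hh, hact, if_false]
      have habs : 0 ≤ |δ - dotp (ξ i) ω| := abs_nonneg _
      have hb : 0 < M - (f i - dotp (ξ i) γ) := by linarith
      have hmul : ε * (|δ - dotp (ξ i) ω| + 1) ≤ M - (f i - dotp (ξ i) γ) := by
        rw [hhi] at hεh
        rw [← le_div_iff₀ (by linarith)]
        exact hεh
      have h1 : ε * (δ - dotp (ξ i) ω) ≤ ε * |δ - dotp (ξ i) ω| :=
        mul_le_mul_of_nonneg_left (le_abs_self _) hε0.le
      have h2 : ε * |δ - dotp (ξ i) ω| ≤ ε * (|δ - dotp (ξ i) ω| + 1) := by nlinarith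
      have h3 : ε * (δ - dotp (ξ i) ω) ≤ M - (f i - dotp (ξ i) γ) := by linarith
      rw [mul_sub] at h3
      linarith
  linarith [hsup]

lemma extract {k : ℕ} (hd : 0 < d) (hk : d < k) (ξ : Fin k → Fin d → ℝ)
    (hi : ∀ s : Finset (Fin k), s.card = d → LinearIndependent ℝ (fun i : s => ξ i))
    (A : Finset (Fin k)) (hhull : (0 : Fin d → ℝ) ∈ convexHull ℝ (ξ '' (A : Set (Fin k)))) :
    ∃ I : Finset (Fin k), I ⊆ A ∧ I.card = d + 1 ∧
      (0 : Fin d → ℝ) ∈ interior (convexHull ℝ (ξ '' (I : Set (Fin k)))) ∧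
      AffineIndependent ℝ (fun i : I => ξ i) ∧
      ∃ q : Fin k → ℝ, (∀ i ∈ I, 0 < q i) ∧ (∀ i ∉ I, q i = 0) ∧
        (∑ i, q i = 1) ∧ (∑ i, q i • ξ i = 0) := by
  classical
  obtain ⟨ι, hι, z, w, hrange, haff, hwpos, hw1, hw0⟩ :=
    eq_pos_convex_span_of_mem_convexHull hhull
  have hzinj : Function.Injective z := haff.injective
  have hchoice : ∀ j : ι, ∃ i : Fin k, i ∈ A ∧ ξ i = z j := by
    intro j
    obtain ⟨i, hiA, hξi⟩ := hrange (Set.mem_range_self j)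
    exact ⟨i, hiA, hξi⟩
  choose σ hσA hσξ using hchoice
  have hσinj : Function.Injective σ := by
    intro a b hab
    exact hzinj (by rw [← hσξ a, ← hσξ b, hab])
  set I : Finset (Fin k) := Finset.image σ Finset.univ with hI
  have hIA : I ⊆ A := by
    intro i hiI
    obtain ⟨j, _, rfl⟩ := Finset.mem_image.1 hiI
    exact hσA j
  have hIcard : I.card = Fintype.card ι := by
    rw [hI, Finset.card_image_of_injective _ hσinj, Finset.card_univ]
  set q : Fin k → ℝ := fun i => ∑ j ∈ Finset.univ.filter (fun j => σ j = i), w j with hq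
  have hfiber : ∀ j : ι, Finset.univ.filter (fun j' => σ j' = σ j) = {j} := by
    intro j; ext j'; simp [hσinj.eq_iff]
  have hqσ : ∀ j : ι, q (σ j) = w j := by
    intro j; rw [hq]; simp only; rw [hfiber j, Finset.sum_singleton]
  have hqI : ∀ i ∈ I, 0 < q i := by
    intro i hiI
    obtain ⟨j, _, rfl⟩ := Finset.mem_image.1 hiI
    rw [hqσ j]; exact hwpos j
  have hq0 : ∀ i ∉ I, q i = 0 := by
    intro i hiI
    rw [hq]
    apply Finset.sum_eq_zero
    intro j hj
    exact absurd (Finset.mem_image.2 ⟨j, Finset.mem_univ j, (Finset.mem_filter.1 hj).2⟩) hiI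
  have hqsum : ∑ i, q i = 1 := by
    rw [hq, ← hw1]
    exact Finset.sum_fiberwise_of_maps_to (fun j _ => Finset.mem_univ (σ j)) w
  have hqvec : ∑ i, q i • ξ i = 0 := by
    have h1 : ∀ i : Fin k, q i • ξ i
        = ∑ j ∈ Finset.univ.filter (fun j => σ j = i), w j • z j := by
      intro i
      rw [hq]
      simp only
      rw [Finset.sum_smul]
      apply Finset.sum_congr rfl
      intro j hj
      rw [← (Finset.mem_filter.1 hj).2, hσξ j]
    rw [show ∑ i, q i • ξ i = ∑ j, w j • z j from by
      simp_rw [h1]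
      exact Finset.sum_fiberwise_of_maps_to (fun j _ => Finset.mem_univ (σ j)) _]
    exact hw0
  have hIq : ∑ i ∈ I, q i = ∑ i, q i :=
    Finset.sum_subset (Finset.subset_univ I) (fun i _ hiI => hq0 i hiI)
  have hIvec : ∑ i ∈ I, q i • ξ i = ∑ i, q i • ξ i :=
    Finset.sum_subset (Finset.subset_univ I)
      (fun i _ hiI => by rw [hq0 i hiI, zero_smul])
  -- cardinality
  have hfr : Module.finrank ℝ (Fin d → ℝ) = d := by
    simp [Module.finrank_pi]
  have hcard_le : Fintype.card ι ≤ d + 1 := by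
    have h1 := haff.card_le_finrank_succ
    have h2 : Module.finrank ℝ ↥(vectorSpan ℝ (Set.range z)) ≤ d := by
      exact le_trans (Submodule.finrank_le _) hfr.le
    omega
  have hcard_ge : d + 1 ≤ Fintype.card ι := by
    by_contra hlt
    push_neg at hlt
    have hIle : I.card ≤ d := by omega
    have hind := indep_small hk ξ hi I hIle
    have hzero : ∀ i : I, q i = 0 := by
      have h2 : ∑ i : I, q (i : Fin k) • ξ (i : Fin k) = 0 := by
        rw [Finset.univ_eq_attach, Finset.sum_attach I (fun i => q i • ξ i), hIvec, hqvec]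
      exact Fintype.linearIndependent_iff.1 hind (fun i : I => q i) h2
    have hzz : ∑ i, q i = 0 := by
      rw [← hIq, ← Finset.sum_attach I q, ← Finset.univ_eq_attach]
      exact Finset.sum_eq_zero fun i _ => hzero i
    rw [hqsum] at hzz
    norm_num at hzz
  have hcard : Fintype.card ι = d + 1 := le_antisymm hcard_le hcard_ge
  -- affine independence of the subfamily
  have hτ : ∀ i : I, ∃ j : ι, σ j = (i : Fin k) := by
    intro i
    obtain ⟨j, _, hji⟩ := Finset.mem_image.1 i.2
    exact ⟨j, hji⟩
  choose τ hτσ using hτ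
  have hτinj : Function.Injective τ := by
    intro a b hab
    apply Subtype.ext
    rw [← hτσ a, ← hτσ b, hab]
  have haff2 : AffineIndependent ℝ (fun i : I => ξ i) := by
    have := haff.comp_embedding ⟨τ, hτinj⟩
    convert this using 1
    · rfl
    · rfl
    funext i
    simp only [Function.Embedding.coeFn_mk, Function.comp_apply]
    rw [← hσξ (τ i), hτσ i]
  -- spanning
  have hcardI : Fintype.card I = d + 1 := by
    rw [Fintype.card_coe, hIcard, hcard]
  have htop : affineSpan ℝ (Set.range (fun i : I => ξ i)) = ⊤ := by
    rw [haff2.affineSpan_eq_top_iff_card_eq_finrank_add_one, hcardI, hfr]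
  set b : AffineBasis I ℝ (Fin d → ℝ) := ⟨fun i : I => ξ i, haff2, htop⟩ with hb
  -- sums over the subtype
  have hq1' : ∑ i : I, q i = 1 := by
    rw [Finset.univ_eq_attach, Finset.sum_attach I q, hIq, hqsum]
  have hqv' : ∑ i : I, q i • ξ (i : Fin k) = 0 := by
    rw [Finset.univ_eq_attach, Finset.sum_attach I (fun i => q i • ξ i), hIvec, hqvec]
  have hcomb : (Finset.univ : Finset I).affineCombination ℝ (fun i : I => ξ i)
      (fun i : I => q i) = 0 := by
    rw [Finset.affineCombination_eq_linear_combination _ _ _ hq1']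
    exact hqv'
  have hcoord : ∀ i : I, b.coord i 0 = q i := by
    intro i
    rw [← hcomb]
    exact b.coord_apply_combination_of_mem (Finset.mem_univ i) hq1'
  have hint : (0 : Fin d → ℝ) ∈ interior (convexHull ℝ (ξ '' (I : Set (Fin k)))) := by
    have hrangeb : Set.range (fun i : I => ξ i) = ξ '' (I : Set (Fin k)) := by
      rw [Set.image_eq_range]
      rfl
    rw [← hrangeb]
    have := b.interior_convexHull
    have hbcoe : ⇑b = fun i : I => ξ i := rfl
    rw [hbcoe] at this
    rw [this]
    intro i
    rw [hcoord i]
    exact hqI i i.2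
  exact ⟨I, hIA, by rw [hIcard, hcard], hint, haff2, q, hqI, hq0, hqsum, hqvec⟩

/-- `v ↦ dotp v ω` as a linear map. -/
def dotLM (ω : Fin d → ℝ) : (Fin d → ℝ) →ₗ[ℝ] ℝ where
  toFun v := dotp v ω
  map_add' x y := by
    show dotp (x + y) ω = dotp x ω + dotp y ω
    rw [dotp_comm, dotp_add_right, dotp_comm ω x, dotp_comm ω y]
  map_smul' c x := by
    show dotp (c • x) ω = (RingHom.id ℝ) c • dotp x ω
    rw [dotp_smul_left]; rfl

lemma hull_of_no_sep {k : ℕ} (ξ : Fin k → Fin d → ℝ) (A : Finset (Fin k))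
    (hno : ¬ ∃ ω : Fin d → ℝ, ∀ i ∈ A, 0 < dotp ω (ξ i)) :
    (0 : Fin d → ℝ) ∈ convexHull ℝ (ξ '' (A : Set (Fin k))) := by
  by_contra h0
  have hfin : (ξ '' (A : Set (Fin k))).Finite := (A.finite_toSet).image ξ
  have hcl : IsClosed (convexHull ℝ (ξ '' (A : Set (Fin k)))) :=
    (hfin.isCompact_convexHull (𝕜 := ℝ)).isClosed
  obtain ⟨φ, u, hφ0, hφpos⟩ :=
    geometric_hahn_banach_point_closed (convex_convexHull ℝ _) hcl h0
  obtain ⟨ω, hω⟩ := repr_functional (φ : (Fin d → ℝ) →ₗ[ℝ] ℝ)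
  apply hno
  refine ⟨ω, fun i hiA => ?_⟩
  have h1 : u < φ (ξ i) := hφpos _ (subset_convexHull ℝ _ ⟨i, hiA, rfl⟩)
  have h2 : φ (0 : Fin d → ℝ) = 0 := map_zero φ
  rw [h2] at hφ0
  have : φ (ξ i) = dotp ω (ξ i) := hω (ξ i)
  linarith
lemma global_P {k : ℕ} (hd : 0 < d) (hk : d < k) (ξ : Fin k → Fin d → ℝ)
    (hi : ∀ s : Finset (Fin k), s.card = d → LinearIndependent ℝ (fun i : s => ξ i))
    (hii : ¬ ∃ ω : Fin d → ℝ, ∀ i, 0 < dotp ω (ξ i)) :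
    ∀ ω : Fin d → ℝ, ω ≠ 0 → ∃ i, dotp (ξ i) ω < 0 := by
  classical
  intro ω hω
  by_contra hcon
  push_neg at hcon
  have hge : ∀ i, 0 ≤ dotp (ξ i) ω := hcon
  set Z : Finset (Fin k) := Finset.univ.filter (fun i => dotp (ξ i) ω = 0) with hZ
  have hZcard : Z.card < d := by
    by_contra hle
    push_neg at hle
    obtain ⟨Z', hZ'sub, hZ'card⟩ := Finset.exists_subset_card_eq hle
    have hind := hi Z' hZ'card
    have hZ'ne : Z'.Nonempty := Finset.card_pos.1 (by rw [hZ'card]; omega)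
    haveI := hZ'ne.to_subtype
    have hspan : Submodule.span ℝ (Set.range (fun i : Z' => ξ i)) = ⊤ :=
      hind.span_eq_top_of_card_eq_finrank
        (by rw [Fintype.card_coe, hZ'card]; simp [Module.finrank_pi])
    have hker : ∀ v : Fin d → ℝ, dotp v ω = 0 := by
      intro v
      have hle2 : Submodule.span ℝ (Set.range (fun i : Z' => ξ i)) ≤
          LinearMap.ker (dotLM ω) := by
        rw [Submodule.span_le]
        rintro x ⟨i, rfl⟩
        have hiZ : (i : Fin k) ∈ Z := hZ'sub i.2
        have : dotp (ξ (i : Fin k)) ω = 0 := (Finset.mem_filter.1 hiZ).2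
        simpa [dotLM, LinearMap.mem_ker] using this
      have := hle2 (hspan ▸ Submodule.mem_top (x := v))
      simpa [dotLM, LinearMap.mem_ker] using this
    exact hω (eq_zero_of_dotp_self ω (by rw [← hker ω]))
  have hZind := indep_small hk ξ hi Z hZcard.le
  obtain ⟨ω', hω'⟩ := dual_pos (fun i : Z => ξ i) hZind
  set T : Finset (Fin k) := Finset.univ \ Z with hT
  have hTne : T.Nonempty := by
    rw [hT, Finset.sdiff_nonempty]
    intro hsub
    have : (Finset.univ : Finset (Fin k)).card ≤ Z.card := Finset.card_le_card hsub
    simp only [Finset.card_univ, Fintype.card_fin] at this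
    omega
  have hTpos : ∀ i ∈ T, 0 < dotp (ξ i) ω := by
    intro i hiT
    rcases lt_or_eq_of_le (hge i) with h | h
    · exact h
    · exact absurd (Finset.mem_filter.2 ⟨Finset.mem_univ i, h.symm⟩)
        ((Finset.mem_sdiff.1 hiT).2)
  set ε : ℝ := T.inf' hTne (fun i => dotp (ξ i) ω / (|dotp (ξ i) ω'| + 1)) with hε
  have hεpos : 0 < ε := by
    apply (Finset.lt_inf'_iff hTne).2
    intro i hiT
    have := hTpos i hiT
    positivity
  apply hii
  refine ⟨ω + ε • ω', fun i => ?_⟩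
  have hsplit : dotp (ω + ε • ω') (ξ i)
      = dotp (ξ i) ω + ε * dotp ω' (ξ i) := by
    rw [dotp_comm, dotp_add_right, dotp_smul_right, dotp_comm (ξ i) ω, dotp_comm (ξ i) ω']
  rw [hsplit]
  by_cases hiZ : i ∈ Z
  · have h1 : dotp (ξ i) ω = 0 := (Finset.mem_filter.1 hiZ).2
    have h2 : 0 < dotp ω' (ξ i) := hω' ⟨i, hiZ⟩
    rw [h1]
    positivity
  · have hiT : i ∈ T := Finset.mem_sdiff.2 ⟨Finset.mem_univ i, hiZ⟩
    have h1 : 0 < dotp (ξ i) ω := hTpos i hiT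
    have h2 : ε ≤ dotp (ξ i) ω / (|dotp ω' (ξ i)| + 1) := by
      have := Finset.inf'_le (fun i => dotp (ξ i) ω / (|dotp (ξ i) ω'| + 1)) hiT
      rwa [dotp_comm (ξ i) ω'] at this
    have habs : 0 ≤ |dotp ω' (ξ i)| := abs_nonneg _
    have h3 : ε * (|dotp ω' (ξ i)| + 1) ≤ dotp (ξ i) ω := by
      rw [← le_div_iff₀ (by linarith)]
      exact h2
    have h4 : -(ε * dotp ω' (ξ i)) ≤ ε * |dotp ω' (ξ i)| := by
      rw [← mul_neg]
      exact mul_le_mul_of_nonneg_left (neg_le_abs _) hεpos.le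
    nlinarith
lemma sup'_subtype {k : ℕ} {I : Finset (Fin k)} (hne : I.Nonempty) (h : Fin k → ℝ) :
    (⨆ i : I, h i) = I.sup' hne h := by
  haveI : Nonempty I := hne.to_subtype
  rw [← Finset.sup'_univ_eq_ciSup]
  apply le_antisymm
  · exact Finset.sup'_le _ _ (fun i _ => Finset.le_sup' h i.2)
  · exact Finset.sup'_le _ _
      (fun i hiI => Finset.le_sup' (fun j : I => h j) (Finset.mem_univ ⟨i, hiI⟩))

lemma sup'_add_const {k : ℕ} (s : Finset (Fin k)) (hs : s.Nonempty) (a : Fin k → ℝ) (c : ℝ) :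
    s.sup' hs (fun i => a i + c) = s.sup' hs a + c := by
  apply le_antisymm
  · exact Finset.sup'_le _ _ (fun i hi =>
      add_le_add_left (Finset.le_sup' a hi) c)
  · have h1 : s.sup' hs a ≤ s.sup' hs (fun i => a i + c) - c := by
      apply Finset.sup'_le _ _
      intro i hi
      rw [le_sub_iff_add_le]
      exact Finset.le_sup' (fun i => a i + c) hi
    linarith

lemma sum_mul_const {k : ℕ} (q : Fin k → ℝ) (c : ℝ) :
    ∑ i, q i * c = (∑ i, q i) * c := by
  rw [Finset.sum_mul]

lemma wavg_le {k : ℕ} (I : Finset (Fin k)) (hne : I.Nonempty) (q : Fin k → ℝ)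
    (hq0 : ∀ i, 0 ≤ q i) (hqoff : ∀ i ∉ I, q i = 0) (hq1 : ∑ i, q i = 1)
    (a : Fin k → ℝ) : ∑ i, q i * a i ≤ I.sup' hne a := by
  calc ∑ i, q i * a i ≤ ∑ i, q i * I.sup' hne a := by
        apply Finset.sum_le_sum
        intro i _
        by_cases hiI : i ∈ I
        · exact mul_le_mul_of_nonneg_left (Finset.le_sup' a hiI) (hq0 i)
        · rw [hqoff i hiI]; simp
  _ = I.sup' hne a := by rw [sum_mul_const, hq1, one_mul]

lemma all_active {k : ℕ} (I : Finset (Fin k)) (hne : I.Nonempty) (q : Fin k → ℝ)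
    (hqpos : ∀ i ∈ I, 0 < q i) (hqoff : ∀ i ∉ I, q i = 0) (hq1 : ∑ i, q i = 1)
    (a : Fin k → ℝ) (hsum : I.sup' hne a ≤ ∑ i, q i * a i) :
    ∀ i ∈ I, a i = I.sup' hne a := by
  by_contra hcon
  push_neg at hcon
  obtain ⟨i₀, hi₀I, hi₀ne⟩ := hcon
  have hq0 : ∀ i, 0 ≤ q i := by
    intro i
    by_cases hiI : i ∈ I
    · exact (hqpos i hiI).le
    · rw [hqoff i hiI]
  have hlt : ∑ i, q i * a i < ∑ i, q i * I.sup' hne a := by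
    apply Finset.sum_lt_sum
    · intro i _
      by_cases hiI : i ∈ I
      · exact mul_le_mul_of_nonneg_left (Finset.le_sup' a hiI) (hq0 i)
      · rw [hqoff i hiI]; simp
    · refine ⟨i₀, Finset.mem_univ i₀, ?_⟩
      exact mul_lt_mul_of_pos_left
        (lt_of_le_of_ne (Finset.le_sup' a hi₀I) hi₀ne) (hqpos i₀ hi₀I)
  rw [sum_mul_const, hq1, one_mul] at hlt
  linarith

lemma wavg_shift {k : ℕ} (q : Fin k → ℝ) (ξ : Fin k → Fin d → ℝ) (f : Fin k → ℝ)
    (γ : Fin d → ℝ) (hqv : ∑ i, q i • ξ i = 0) :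
    ∑ i, q i * (f i - dotp (ξ i) γ) = ∑ i, q i * f i := by
  have h2 : ∑ i, q i * dotp (ξ i) γ = 0 := by
    rw [← dotp_sum_left Finset.univ q ξ γ, hqv, dotp_zero_left]
  have h3 : ∑ i, q i * (f i - dotp (ξ i) γ)
      = ∑ i, q i * f i - ∑ i, q i * dotp (ξ i) γ := by
    rw [← Finset.sum_sub_distrib]
    exact Finset.sum_congr rfl fun i _ => by ring
  rw [h3, h2, sub_zero]

lemma vanish_eq_zero {k : ℕ} (hd : 0 < d) (hk : d < k) (ξ : Fin k → Fin d → ℝ)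
    (hi : ∀ s : Finset (Fin k), s.card = d → LinearIndependent ℝ (fun i : s => ξ i))
    (I : Finset (Fin k)) (hcard : d ≤ I.card) (ω : Fin d → ℝ)
    (hvan : ∀ i ∈ I, dotp (ξ i) ω = 0) : ω = 0 := by
  classical
  obtain ⟨Z', hZ'sub, hZ'card⟩ := Finset.exists_subset_card_eq hcard
  have hind := hi Z' hZ'card
  have hZ'ne : Z'.Nonempty := Finset.card_pos.1 (by rw [hZ'card]; omega)
  haveI := hZ'ne.to_subtype
  have hspan : Submodule.span ℝ (Set.range (fun i : Z' => ξ i)) = ⊤ :=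
    hind.span_eq_top_of_card_eq_finrank
      (by rw [Fintype.card_coe, hZ'card]; simp [Module.finrank_pi])
  have hker : ∀ v : Fin d → ℝ, dotp v ω = 0 := by
    intro v
    have hle2 : Submodule.span ℝ (Set.range (fun i : Z' => ξ i)) ≤
        LinearMap.ker (dotLM ω) := by
      rw [Submodule.span_le]
      rintro x ⟨i, rfl⟩
      simpa [dotLM, LinearMap.mem_ker] using hvan i (hZ'sub i.2)
    have := hle2 (hspan ▸ Submodule.mem_top (x := v))
    simpa [dotLM, LinearMap.mem_ker] using this
  exact eq_zero_of_dotp_self ω (by rw [← hker ω])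

lemma at_min {k : ℕ} (hd : 0 < d) (hk : d < k) (ξ : Fin k → Fin d → ℝ) (f : Fin k → ℝ)
    (hi : ∀ s : Finset (Fin k), s.card = d → LinearIndependent ℝ (fun i : s => ξ i))
    (g : (Fin d → ℝ) → ℝ) (Dg : (Fin d → ℝ) → (Fin d → ℝ) → ℝ)
    (hDg : ∀ x y, Filter.Tendsto (fun ε : ℝ => (g (x + ε • y) - g x) / ε)
      (nhdsWithin 0 (Set.Ioi 0)) (nhds (Dg x y)))
    (hcond : ∀ I : Finset (Fin k), (∃ ω, ∀ i ∈ I, 0 < dotp ω (ξ i)) →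
      ∃ ω, (∀ i ∈ I, 0 < dotp ω (ξ i)) ∧ ∀ i ∈ I, ∀ γ : Fin d → ℝ, Dg γ ω < dotp (ξ i) ω)
    (s : Finset (Fin k)) (hs : s.Nonempty) (γ₀ : Fin d → ℝ)
    (hmin : ∀ γ, (s.sup' hs fun i => f i - dotp (ξ i) γ₀) + g γ₀ ≤
                 (s.sup' hs fun i => f i - dotp (ξ i) γ) + g γ) :
    ∃ I : Finset (Fin k), I ⊆ s ∧ I.card = d + 1 ∧
      (0 : Fin d → ℝ) ∈ interior (convexHull ℝ (ξ '' (I : Set (Fin k)))) ∧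
      AffineIndependent ℝ (fun i : I => ξ i) ∧
      (∀ i ∈ I, f i - dotp (ξ i) γ₀ = s.sup' hs fun j => f j - dotp (ξ j) γ₀) ∧
      ∃ q : Fin k → ℝ, (∀ i ∈ I, 0 < q i) ∧ (∀ i ∉ I, q i = 0) ∧
        (∑ i, q i = 1) ∧ (∑ i, q i • ξ i = 0) := by
  classical
  set M := s.sup' hs fun j => f j - dotp (ξ j) γ₀ with hM
  set A := s.filter (fun i => f i - dotp (ξ i) γ₀ = M) with hA
  have hnosep : ¬ ∃ ω : Fin d → ℝ, ∀ i ∈ A, 0 < dotp ω (ξ i) := by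
    intro hex
    obtain ⟨ω, hω1, hω2⟩ := hcond A hex
    obtain ⟨γ', hγ'⟩ := descent ξ f g Dg hDg s hs γ₀ ω (fun i his hact =>
      hω2 i (Finset.mem_filter.2 ⟨his, hact⟩) γ₀)
    exact absurd (hmin γ') (not_le.2 hγ')
  have hhull := hull_of_no_sep ξ A hnosep
  obtain ⟨I, hIA, hIcard, hint, haff, q, hqpos, hq0, hq1, hqv⟩ :=
    extract hd hk ξ hi A hhull
  refine ⟨I, fun i hiI => (Finset.mem_filter.1 (hIA hiI)).1, hIcard, hint, haff,
    fun i hiI => (Finset.mem_filter.1 (hIA hiI)).2, q, hqpos, hq0, hq1, hqv⟩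

end Stmt11Aux

open Stmt11Aux

theorem stmt11 (d k : ℕ) (hk : d < k) (ξ : Fin k → (Fin d → ℝ)) (f : Fin k → ℝ)
    (hne : ∀ i, ξ i ≠ 0)
    -- (i): no d of the vectors are linearly dependent
    (hi : ∀ s : Finset (Fin k), s.card = d → LinearIndependent ℝ (fun i : s => ξ i))
    -- (ii): no ω has positive inner product with all the ξᵢ
    (hii : ¬ ∃ ω : Fin d → ℝ, ∀ i, 0 < dotp ω (ξ i))
    (g : (Fin d → ℝ) → ℝ)
    (hg0 : ∀ x, 0 ≤ g x)
    -- g is Lipschitz continuous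
    (C : ℝ) (hgLip : ∀ x y, |g x - g y| ≤ C * euclNorm (x - y))
    -- g has directional derivatives Dg x y at every point x in every direction y
    (Dg : (Fin d → ℝ) → (Fin d → ℝ) → ℝ)
    (hDg : ∀ x y, Filter.Tendsto (fun ε : ℝ => (g (x + ε • y) - g x) / ε)
      (nhdsWithin 0 (Set.Ioi 0)) (nhds (Dg x y)))
    -- for every subfamily not satisfying (ii) one can choose a separating ω dominating Dg
    (hcond : ∀ I : Finset (Fin k), (∃ ω, ∀ i ∈ I, 0 < dotp ω (ξ i)) →
      ∃ ω, (∀ i ∈ I, 0 < dotp ω (ξ i)) ∧ ∀ i ∈ I, ∀ γ : Fin d → ℝ, Dg γ ω < dotp (ξ i) ω) :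
    let F : (Fin d → ℝ) → ℝ := fun γ => ⨆ i, (f i - dotp (ξ i) γ + g γ)
    let Fu : (Fin d → ℝ) → ℝ := fun γ => ⨆ i, (f i - dotp (ξ i) γ)
    (∃ γ₀ : Fin d → ℝ,
      IsLeast (Set.range F) (F γ₀) ∧
      IsGreatest { y : ℝ | ∃ I : Finset (Fin k), I.card = d + 1 ∧
        (0 : Fin d → ℝ) ∈ interior (convexHull ℝ (ξ '' I)) ∧
        ∃ p : Fin k → ℝ, (∀ i, 0 ≤ p i) ∧ (∀ i ∉ I, p i = 0) ∧
          (∑ i, p i = 1) ∧ (∑ i, p i • ξ i = 0) ∧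
          ∃ γI : Fin d → ℝ,
            (∀ γ, (⨆ i : I, (f i - dotp (ξ i) γI)) ≤ ⨆ i : I, (f i - dotp (ξ i) γ)) ∧
            (∀ γ', (∀ γ, (⨆ i : I, (f i - dotp (ξ i) γ')) ≤ ⨆ i : I, (f i - dotp (ξ i) γ))
              → γ' = γI) ∧
            y = (∑ i, p i * f i) + g γI } (F γ₀)) ∧
    -- in particular, for k = d+1 the minimizer is the same as for vanishing g and the
    -- value is the unperturbed value plus g(γ₀)
    (k = d + 1 → ∀ γu : Fin d → ℝ, (∀ γ, Fu γu ≤ Fu γ) →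
      (∀ γ, F γu ≤ F γ) ∧ F γu = Fu γu + g γu) := by
  intro F Fu
  classical
  have hd : 0 < d := by
    rcases Nat.eq_zero_or_pos d with h | h
    · exfalso
      apply hne ⟨0, by omega⟩
      funext j
      exact absurd j.isLt (by omega)
    · exact h
  haveI hkne : Nonempty (Fin k) := ⟨⟨0, by omega⟩⟩
  have huniv : (Finset.univ : Finset (Fin k)).Nonempty := Finset.univ_nonempty
  have hgc : Continuous g := g_continuous g C hgLip
  have hFu : ∀ γ, Fu γ = Finset.univ.sup' huniv (fun i => f i - dotp (ξ i) γ) := by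
    intro γ
    show (⨆ i, (f i - dotp (ξ i) γ)) = _
    exact (Finset.sup'_univ_eq_ciSup _).symm
  have hF : ∀ γ, F γ = Finset.univ.sup' huniv (fun i => f i - dotp (ξ i) γ) + g γ := by
    intro γ
    show (⨆ i, (f i - dotp (ξ i) γ + g γ)) = _
    rw [← sup'_add_const Finset.univ huniv _ (g γ), Finset.sup'_univ_eq_ciSup]
  -- global minimizer
  obtain ⟨γ₀, hγ₀min⟩ := exists_min hd ξ f g hg0 hgc Finset.univ huniv
    (fun ω hω => by
      obtain ⟨i, hilt⟩ := global_P hd hk ξ hi hii ω hω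
      exact ⟨i, Finset.mem_univ i, hilt⟩)
  have hminF : ∀ γ, F γ₀ ≤ F γ := by
    intro γ; rw [hF, hF]; exact hγ₀min γ
  obtain ⟨I, hIsub, hIcard, hint, haff, hact, q, hqpos, hqoff, hq1, hqv⟩ :=
    at_min hd hk ξ f hi g Dg hDg hcond Finset.univ huniv γ₀ hγ₀min
  have hIne : I.Nonempty := Finset.card_pos.1 (by rw [hIcard]; omega)
  set M := Finset.univ.sup' huniv (fun j => f j - dotp (ξ j) γ₀) with hM
  have hq0 : ∀ i, 0 ≤ q i := fun i => by
    by_cases hiI : i ∈ I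
    · exact (hqpos i hiI).le
    · rw [hqoff i hiI]
  have hEI : ∑ i, q i * f i = M := by
    have h1 : ∑ i, q i * (f i - dotp (ξ i) γ₀) = M := by
      have hc : ∀ i ∈ Finset.univ, q i * (f i - dotp (ξ i) γ₀) = q i * M := by
        intro i _
        by_cases hiI : i ∈ I
        · rw [hact i hiI]
        · rw [hqoff i hiI]; ring
      rw [Finset.sum_congr rfl hc, sum_mul_const, hq1, one_mul]
    rw [← wavg_shift q ξ f γ₀ hqv, h1]
  have hsupI : I.sup' hIne (fun i => f i - dotp (ξ i) γ₀) = M := by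
    apply le_antisymm
    · exact Finset.sup'_le _ _ (fun i hiI => le_of_eq (hact i hiI))
    · obtain ⟨i, hiI⟩ := hIne
      rw [← hact i hiI]
      exact Finset.le_sup' (fun j => f j - dotp (ξ j) γ₀) hiI
  have hsubmin : ∀ γ, (⨆ i : I, (f i - dotp (ξ i) γ₀)) ≤ ⨆ i : I, (f i - dotp (ξ i) γ) := by
    intro γ
    rw [sup'_subtype hIne (fun j => f j - dotp (ξ j) γ₀),
      sup'_subtype hIne (fun j => f j - dotp (ξ j) γ), hsupI]
    calc M = ∑ i, q i * (f i - dotp (ξ i) γ) := by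
          rw [wavg_shift q ξ f γ hqv, hEI]
    _ ≤ _ := wavg_le I hIne q hq0 hqoff hq1 _
  have hsubuniq : ∀ γ', (∀ γ, (⨆ i : I, (f i - dotp (ξ i) γ')) ≤
      ⨆ i : I, (f i - dotp (ξ i) γ)) → γ' = γ₀ := by
    intro γ' hγ'
    have h1 : I.sup' hIne (fun i => f i - dotp (ξ i) γ') ≤ M := by
      have := hγ' γ₀
      rwa [sup'_subtype hIne (fun j => f j - dotp (ξ j) γ'),
        sup'_subtype hIne (fun j => f j - dotp (ξ j) γ₀), hsupI] at this
    have h2 : M ≤ ∑ i, q i * (f i - dotp (ξ i) γ') := by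
      rw [wavg_shift q ξ f γ' hqv, hEI]
    have h3 : I.sup' hIne (fun i => f i - dotp (ξ i) γ') ≤
        ∑ i, q i * (f i - dotp (ξ i) γ') := le_trans h1 h2
    have hact' := all_active I hIne q hqpos hqoff hq1 _ h3
    have h4 : M ≤ I.sup' hIne (fun i => f i - dotp (ξ i) γ') :=
      le_trans h2 (wavg_le I hIne q hq0 hqoff hq1 _)
    have h5 : I.sup' hIne (fun i => f i - dotp (ξ i) γ') = M := le_antisymm h1 h4
    have hvan : ∀ i ∈ I, dotp (ξ i) (γ' - γ₀) = 0 := by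
      intro i hiI
      have e1 : f i - dotp (ξ i) γ' = M := by rw [hact' i hiI, h5]
      have e2 : f i - dotp (ξ i) γ₀ = M := hact i hiI
      rw [dotp_sub_right]
      linarith
    exact sub_eq_zero.1 (vanish_eq_zero hd hk ξ hi I (by omega) _ hvan)
  have hmem : F γ₀ ∈ { y : ℝ | ∃ I : Finset (Fin k), I.card = d + 1 ∧
      (0 : Fin d → ℝ) ∈ interior (convexHull ℝ (ξ '' I)) ∧
      ∃ p : Fin k → ℝ, (∀ i, 0 ≤ p i) ∧ (∀ i ∉ I, p i = 0) ∧
        (∑ i, p i = 1) ∧ (∑ i, p i • ξ i = 0) ∧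
        ∃ γI : Fin d → ℝ,
          (∀ γ, (⨆ i : I, (f i - dotp (ξ i) γI)) ≤ ⨆ i : I, (f i - dotp (ξ i) γ)) ∧
          (∀ γ', (∀ γ, (⨆ i : I, (f i - dotp (ξ i) γ')) ≤ ⨆ i : I, (f i - dotp (ξ i) γ))
            → γ' = γI) ∧
          y = (∑ i, p i * f i) + g γI } := by
    refine ⟨I, hIcard, hint, q, hq0, hqoff, hq1, hqv, γ₀, hsubmin, hsubuniq, ?_⟩
    rw [hF, hEI]
  have hub : ∀ y ∈ { y : ℝ | ∃ I : Finset (Fin k), I.card = d + 1 ∧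
      (0 : Fin d → ℝ) ∈ interior (convexHull ℝ (ξ '' I)) ∧
      ∃ p : Fin k → ℝ, (∀ i, 0 ≤ p i) ∧ (∀ i ∉ I, p i = 0) ∧
        (∑ i, p i = 1) ∧ (∑ i, p i • ξ i = 0) ∧
        ∃ γI : Fin d → ℝ,
          (∀ γ, (⨆ i : I, (f i - dotp (ξ i) γI)) ≤ ⨆ i : I, (f i - dotp (ξ i) γ)) ∧
          (∀ γ', (∀ γ, (⨆ i : I, (f i - dotp (ξ i) γ')) ≤ ⨆ i : I, (f i - dotp (ξ i) γ))
            → γ' = γI) ∧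
          y = (∑ i, p i * f i) + g γI }, y ≤ F γ₀ := by
    rintro y ⟨I', hc', hint', p', hp0', hpoff', hp1', hpv', γI', hγImin', hγIuniq', rfl⟩
    have hI'ne : I'.Nonempty := Finset.card_pos.1 (by rw [hc']; omega)
    have hP' : ∀ ω : Fin d → ℝ, ω ≠ 0 → ∃ i ∈ I', dotp (ξ i) ω < 0 := by
      intro ω hω
      by_contra hcon
      push_neg at hcon
      have hH : convexHull ℝ (ξ '' (I' : Set (Fin k))) ⊆ {x | 0 ≤ dotp x ω} := by
        apply convexHull_min
        · rintro x ⟨i, hiI, rfl⟩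
          exact hcon i hiI
        · intro x hx yy hyy a b ha hb hab
          simp only [Set.mem_setOf_eq] at hx hyy ⊢
          have hsplit : dotp (a • x + b • yy) ω = a * dotp x ω + b * dotp yy ω := by
            rw [dotp_comm, dotp_add_right, dotp_smul_right, dotp_smul_right,
              dotp_comm ω x, dotp_comm ω yy]
          rw [hsplit]
          have := mul_nonneg ha hx
          have := mul_nonneg hb hyy
          linarith
      obtain ⟨ε, hε, hball⟩ := Metric.mem_nhds_iff.1 (mem_interior_iff_mem_nhds.1 hint')
      have hωω : 0 < dotp ω ω :=
        lt_of_le_of_ne (dotp_self_nonneg ω) (fun h => hω (eq_zero_of_dotp_self ω h.symm))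
      have hnω : 0 < ‖ω‖ := norm_pos_iff.2 hω
      set x : Fin d → ℝ := (-(ε / (2 * ‖ω‖))) • ω with hx
      have hxmem : x ∈ Metric.ball (0 : Fin d → ℝ) ε := by
        rw [Metric.mem_ball, dist_zero_right, hx, norm_smul]
        rw [Real.norm_eq_abs, abs_neg, abs_of_nonneg (by positivity)]
        have heq : ε / (2 * ‖ω‖) * ‖ω‖ = ε / 2 := by
          field_simp
        rw [heq]
        linarith
      have hxh := hH (hball hxmem)
      rw [Set.mem_setOf_eq, hx, dotp_smul_left] at hxh
      have hfrac : 0 < ε / (2 * ‖ω‖) := by positivity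
      nlinarith [mul_pos hfrac hωω]
    obtain ⟨γ₁, hγ₁min⟩ := exists_min hd ξ f g hg0 hgc I' hI'ne hP'
    obtain ⟨J, hJsub, hJcard, hintJ, haffJ, hactJ, q', hq'pos, hq'off, hq'1, hq'v⟩ :=
      at_min hd hk ξ f hi g Dg hDg hcond I' hI'ne γ₁ hγ₁min
    have hJI : J = I' := Finset.eq_of_subset_of_card_le hJsub (by rw [hJcard, hc'])
    subst hJI
    set M₁ := J.sup' hI'ne (fun j => f j - dotp (ξ j) γ₁) with hM₁
    have hq'0 : ∀ i, 0 ≤ q' i := fun i => by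
      by_cases hiI : i ∈ J
      · exact (hq'pos i hiI).le
      · rw [hq'off i hiI]
    have hEI₁ : ∑ i, q' i * f i = M₁ := by
      have h1 : ∑ i, q' i * (f i - dotp (ξ i) γ₁) = M₁ := by
        have hc2 : ∀ i ∈ Finset.univ, q' i * (f i - dotp (ξ i) γ₁) = q' i * M₁ := by
          intro i _
          by_cases hiI : i ∈ J
          · rw [hactJ i hiI]
          · rw [hq'off i hiI]; ring
        rw [Finset.sum_congr rfl hc2, sum_mul_const, hq'1, one_mul]
      rw [← wavg_shift q' ξ f γ₁ hq'v, h1]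
    have hγ₁Fu : ∀ γ, (⨆ i : J, (f i - dotp (ξ i) γ₁)) ≤ ⨆ i : J, (f i - dotp (ξ i) γ) := by
      intro γ
      rw [sup'_subtype hI'ne (fun j => f j - dotp (ξ j) γ₁),
        sup'_subtype hI'ne (fun j => f j - dotp (ξ j) γ)]
      calc J.sup' hI'ne (fun i => f i - dotp (ξ i) γ₁) = M₁ := rfl
      _ = ∑ i, q' i * (f i - dotp (ξ i) γ) := by rw [wavg_shift q' ξ f γ hq'v, hEI₁]
      _ ≤ _ := wavg_le J hI'ne q' hq'0 hq'off hq'1 _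
    have hγ₁eq : γ₁ = γI' := hγIuniq' γ₁ hγ₁Fu
    -- p' coincides with q' by uniqueness of the risk-neutral weights
    have hp'I : ∑ i ∈ J, p' i = 1 := by
      rw [Finset.sum_subset (Finset.subset_univ J) (fun i _ hiI => hpoff' i hiI), hp1']
    have hq'I : ∑ i ∈ J, q' i = 1 := by
      rw [Finset.sum_subset (Finset.subset_univ J) (fun i _ hiI => hq'off i hiI), hq'1]
    have hp'vI : ∑ i ∈ J, p' i • ξ i = 0 := by
      rw [Finset.sum_subset (Finset.subset_univ J)
        (fun i _ hiI => by rw [hpoff' i hiI, zero_smul]), hpv']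
    have hq'vI : ∑ i ∈ J, q' i • ξ i = 0 := by
      rw [Finset.sum_subset (Finset.subset_univ J)
        (fun i _ hiI => by rw [hq'off i hiI, zero_smul]), hq'v]
    have hczero : ∀ i ∈ J, p' i - q' i = 0 := by
      have hcs : ∑ i : J, (p' (i : Fin k) - q' (i : Fin k)) = 0 := by
        rw [Finset.univ_eq_attach, Finset.sum_attach J (fun i => p' i - q' i),
          Finset.sum_sub_distrib, hp'I, hq'I, sub_self]
      have hcv : ∑ i : J, (p' (i : Fin k) - q' (i : Fin k)) • ξ (i : Fin k) = 0 := by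
        rw [Finset.univ_eq_attach, Finset.sum_attach J (fun i => (p' i - q' i) • ξ i)]
        have : ∀ i ∈ J, (p' i - q' i) • ξ i = p' i • ξ i - q' i • ξ i :=
          fun i _ => sub_smul _ _ _
        rw [Finset.sum_congr rfl this, Finset.sum_sub_distrib, hp'vI, hq'vI, sub_self]
      have h6 := affineIndependent_iff.1 haffJ Finset.univ
        (fun i : J => p' (i : Fin k) - q' (i : Fin k)) hcs hcv
      intro i hiJ
      exact h6 ⟨i, hiJ⟩ (Finset.mem_univ _)
    have hp'q' : ∑ i, p' i * f i = ∑ i, q' i * f i := by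
      apply Finset.sum_congr rfl
      intro i _
      by_cases hiJ : i ∈ J
      · have := hczero i hiJ
        have : p' i = q' i := by linarith
        rw [this]
      · rw [hpoff' i hiJ, hq'off i hiJ]
    calc (∑ i, p' i * f i) + g γI' = M₁ + g γ₁ := by
          rw [hp'q', hEI₁, ← hγ₁eq]
    _ ≤ J.sup' hI'ne (fun i => f i - dotp (ξ i) γ₀) + g γ₀ := hγ₁min γ₀
    _ ≤ Finset.univ.sup' huniv (fun i => f i - dotp (ξ i) γ₀) + g γ₀ := by
          apply add_le_add_left
          exact Finset.sup'_le _ _ (fun i _ =>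
            Finset.le_sup' (fun j => f j - dotp (ξ j) γ₀) (Finset.mem_univ i))
    _ = F γ₀ := (hF γ₀).symm
  refine ⟨⟨γ₀, ⟨⟨γ₀, rfl⟩, ?_⟩, hmem, hub⟩, ?_⟩
  · rintro y ⟨γ, rfl⟩
    exact hminF γ
  -- the k = d + 1 case
  intro hkd γu hγu
  have hFFu : ∀ γ, F γ = Fu γ + g γ := by
    intro γ; rw [hF, hFu]
  have hIuniv : I = Finset.univ :=
    Finset.eq_univ_of_card I (by rw [hIcard]; simp [hkd])
  have hFuγ₀ : Fu γ₀ = M := hFu γ₀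
  have h7 : Fu γu ≤ M := by rw [← hFuγ₀]; exact hγu γ₀
  have h8 : M ≤ Fu γu := by
    rw [hFu]
    calc M = ∑ i, q i * (f i - dotp (ξ i) γu) := by rw [wavg_shift q ξ f γu hqv, hEI]
    _ ≤ _ := by
        have h9 := wavg_le I hIne q hq0 hqoff hq1 (fun i => f i - dotp (ξ i) γu)
        exact le_trans h9 (Finset.sup'_le _ _ (fun i _ =>
          Finset.le_sup' (fun j => f j - dotp (ξ j) γu) (Finset.mem_univ i)))
  have hFuγu : Fu γu = M := le_antisymm h7 h8
  have hactu : ∀ i ∈ I, f i - dotp (ξ i) γu =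
      I.sup' hIne (fun j => f j - dotp (ξ j) γu) := by
    apply all_active I hIne q hqpos hqoff hq1
    have hsupu : I.sup' hIne (fun j => f j - dotp (ξ j) γu) ≤ M := by
      rw [← hFuγu, hFu]
      exact Finset.sup'_le _ _ (fun i _ =>
        Finset.le_sup' (fun j => f j - dotp (ξ j) γu) (Finset.mem_univ i))
    have : M ≤ ∑ i, q i * (f i - dotp (ξ i) γu) := by
      rw [wavg_shift q ξ f γu hqv, hEI]
    linarith
  have hsupuM : I.sup' hIne (fun j => f j - dotp (ξ j) γu) = M := by
    apply le_antisymm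
    · rw [← hFuγu, hFu]
      exact Finset.sup'_le _ _ (fun i _ =>
        Finset.le_sup' (fun j => f j - dotp (ξ j) γu) (Finset.mem_univ i))
    · calc M ≤ ∑ i, q i * (f i - dotp (ξ i) γu) := by
            rw [wavg_shift q ξ f γu hqv, hEI]
      _ ≤ _ := wavg_le I hIne q hq0 hqoff hq1 _
  have hvan : ∀ i ∈ I, dotp (ξ i) (γu - γ₀) = 0 := by
    intro i hiI
    have e1 : f i - dotp (ξ i) γu = M := by rw [hactu i hiI, hsupuM]
    have e2 : f i - dotp (ξ i) γ₀ = M := hact i hiI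
    rw [dotp_sub_right]
    linarith
  have hγuγ₀ : γu = γ₀ :=
    sub_eq_zero.1 (vanish_eq_zero hd hk ξ hi I (by omega) _ hvan)
  constructor
  · intro γ
    rw [hγuγ₀]
    exact hminF γ
  · rw [hFFu]
end
end

section
/- Let f : ℝ_+^J → ℝ be convex, let 0 < d_i < ρ < u_i for i = 1,…,J, let Π = ×_{i=1}^J [d_i,u_i] with vertices ξ_I = (d_i for i∈I, u_j for j∉I), I ⊂ {1,…,J}, and suppose the vertices are in general position in the sense that for any J subsets I₁,…,I_J the vectors ξ_{I_k} − ρ𝟙 (k = 1,…,J) are linearly independent in ℝ^J. Then for every z ∈ ℝ_+^J with positive coordinates, the reduced Bellman operator (𝓑f)(z) = min_{γ∈ℝ^J} max_{ξ^j∈[d_j,u_j]} [f(ξ∘z) − ⟨γ, ξ∘z − ρz⟩] satisfies (𝓑f)(z) = max_Ω 𝔼_Ω f(ξ∘z), where Ω ranges over all subsets of J+1 vertices of Π whose convex hull contains ρ𝟙 in its interior, and 𝔼_Ω denotes expectation with respect to the unique probability law supported on Ω that is risk-neutral with respect to ρ𝟙, i.e. Σ_{ξ_I∈Ω} p_I ξ_I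 = ρ𝟙. -/
noncomputable section

/-- The reduced Bellman operator
`(𝓑f)(z) = min_γ max_{ξ ∈ Π[d_j,u_j]} [f(ξ∘z) − ⟨γ, ξ∘z − ρz⟩]`. -/
def Bop (J : ℕ) (ρ : ℝ) (dd uu : Fin J → ℝ) (f : (Fin J → ℝ) → ℝ) :
    (Fin J → ℝ) → ℝ :=
  fun z => ⨅ γ : Fin J → ℝ,
    ⨆ ξ : { ξ : Fin J → ℝ // ∀ j, ξ j ∈ Set.Icc (dd j) (uu j) },
      (f (fun j => ξ.1 j * z j) - ∑ j, γ j * (ξ.1 j * z j - ρ * z j))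

/-- The vertex of the parallelepiped `Π = ×_i [d_i, u_i]` determined by the subset `I`:
coordinate `d_j` for `j ∈ I` and `u_j` for `j ∉ I`. -/
def vtx (J : ℕ) (dd uu : Fin J → ℝ) (I : Finset (Fin J)) : Fin J → ℝ :=
  fun j => if j ∈ I then dd j else uu j

namespace S15

variable {J : ℕ}


lemma vtx_mem_box {dd uu : Fin J → ℝ} (h : ∀ j, dd j ≤ uu j) (I : Finset (Fin J)) (j : Fin J) :
    vtx J dd uu I j ∈ Set.Icc (dd j) (uu j) := by
  unfold vtx
  split <;> simp [h j]

lemma vtx_inj {dd uu : Fin J → ℝ} (h : ∀ j, dd j ≠ uu j) :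
    Function.Injective (vtx J dd uu) := by
  intro I I' hII
  ext j
  have hj := congrFun hII j
  unfold vtx at hj
  by_cases h1 : j ∈ I <;> by_cases h2 : j ∈ I' <;>
    simp [h1, h2] at hj ⊢ <;>
    first
    | exact absurd hj (h j)
    | exact absurd hj.symm (h j)

lemma box_subset_hull {dd uu : Fin J → ℝ} (h : ∀ j, dd j ≤ uu j) (ξ : Fin J → ℝ)
    (hξ : ∀ j, ξ j ∈ Set.Icc (dd j) (uu j)) :
    ξ ∈ convexHull ℝ (Set.range (vtx J dd uu)) := by
  have h1 : ξ ∈ Set.pi Set.univ (fun j => convexHull ℝ ({dd j, uu j} : Set ℝ)) := by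
    intro j _
    show ξ j ∈ convexHull ℝ ({dd j, uu j} : Set ℝ)
    rw [convexHull_pair, segment_eq_Icc (h j)]
    exact hξ j
  rw [← convexHull_pi] at h1
  refine convexHull_mono ?_ h1
  rintro ξ' hξ'
  refine ⟨Finset.univ.filter (fun j => ξ' j = dd j), ?_⟩
  funext j
  have hj := hξ' j (Set.mem_univ j)
  unfold vtx
  simp only [Finset.mem_filter, Finset.mem_univ, true_and]
  rcases hj with hj | hj
  · rw [if_pos hj]; exact hj.symm
  · by_cases h2 : ξ' j = dd j
    · rw [if_pos h2]; exact h2.symm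
    · rw [if_neg h2]; exact hj.symm

lemma hull_subset_box {dd uu : Fin J → ℝ} (h : ∀ j, dd j ≤ uu j) :
    convexHull ℝ (Set.range (vtx J dd uu)) ⊆ {ξ | ∀ j, ξ j ∈ Set.Icc (dd j) (uu j)} := by
  apply convexHull_min
  · rintro _ ⟨I, rfl⟩ j
    exact vtx_mem_box h I j
  · have he : {ξ : Fin J → ℝ | ∀ j, ξ j ∈ Set.Icc (dd j) (uu j)} =
        Set.pi Set.univ (fun j => Set.Icc (dd j) (uu j)) := by
      ext ξ; simp [Set.mem_pi, Set.mem_Icc, Pi.le_def, forall_and]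
    rw [he]
    exact convex_pi fun j _ => convex_Icc _ _

lemma extract {E : Type*} [AddCommGroup E] [Module ℝ E] (g : Finset (Fin J) → E)
    (hg : Function.Injective g) {x : E} (hx : x ∈ convexHull ℝ (Set.range g)) :
    ∃ p : Finset (Fin J) → ℝ, (∀ I, 0 ≤ p I) ∧ (∑ I, p I) = 1 ∧ (∑ I, p I • g I) = x := by
  classical
  have hr : Set.range g = ↑(Finset.univ.image g) := by simp
  rw [hr, Finset.convexHull_eq] at hx
  obtain ⟨wf, hw0, hw1, hwc⟩ := hx
  refine ⟨fun I => wf (g I),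
    fun I => hw0 _ (Finset.mem_image_of_mem _ (Finset.mem_univ _)), ?_, ?_⟩
  · rw [← hw1]
    exact (Finset.sum_image (fun a _ b _ h => hg h)).symm
  · rw [← hwc, Finset.centerMass_eq_of_sum_1 _ _ hw1]
    rw [Finset.sum_image (fun a _ b _ h => hg h)]
    rfl

/-- Workhorse: coefficients of a vanishing combination over at most `J` vertices vanish. -/
lemma zero_coeffs {ρ : ℝ} {dd uu : Fin J → ℝ}
    (hgen : ∀ Is : Fin J → Finset (Fin J), Function.Injective Is →
      LinearIndependent ℝ (fun m => vtx J dd uu (Is m) - ρ • (1 : Fin J → ℝ)))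
    (S : Finset (Finset (Fin J))) (hS : S.card ≤ J)
    (c : Finset (Fin J) → ℝ)
    (hsum : ∑ I ∈ S, c I • (vtx J dd uu I - ρ • (1 : Fin J → ℝ)) = 0) :
    ∀ I ∈ S, c I = 0 := by
  have hcard : J ≤ Fintype.card (Finset (Fin J)) := by
    rw [Fintype.card_finset, Fintype.card_fin]
    exact (Nat.lt_two_pow_self (n := J)).le
  obtain ⟨S', hSS', hS'⟩ := Finset.exists_superset_card_eq hS hcard
  set c' : Finset (Fin J) → ℝ := fun I => if I ∈ S then c I else 0 with hc'
  have hsum' : ∑ I ∈ S', c' I • (vtx J dd uu I - ρ • (1 : Fin J → ℝ)) = 0 := by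
    have hzero : ∀ I ∈ S', I ∉ S → c' I • (vtx J dd uu I - ρ • (1 : Fin J → ℝ)) = 0 := by
      intro I _ hI
      simp [hc', hI]
    rw [← Finset.sum_subset hSS' hzero, ← hsum]
    exact Finset.sum_congr rfl (fun I hI => by simp [hc', hI])
  have e : Fin J ≃ ↥S' := (finCongr hS'.symm).trans S'.equivFin.symm
  set Is : Fin J → Finset (Fin J) := fun m => ↑(e m) with hIs
  have hinj : Function.Injective Is := fun m m' hmm =>
    e.injective (Subtype.ext hmm)
  have hli := hgen Is hinj
  have hz := Fintype.linearIndependent_iff.mp hli (fun m => c' (Is m))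
  have hre : ∑ m, c' (Is m) • (vtx J dd uu (Is m) - ρ • (1 : Fin J → ℝ)) = 0 := by
    rw [Equiv.sum_comp e (fun i : ↥S' => c' ↑i • (vtx J dd uu ↑i - ρ • (1 : Fin J → ℝ)))]
    rw [Finset.sum_coe_sort S' (fun I => c' I • (vtx J dd uu I - ρ • (1 : Fin J → ℝ)))]
    exact hsum'
  intro I hI
  have hI' : I ∈ S' := hSS' hI
  have := hz hre (e.symm ⟨I, hI'⟩)
  simp only [hIs, Equiv.apply_symm_apply] at this
  rw [show c I = c' I from (if_pos hI).symm]
  exact this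



def Feas (J : ℕ) (ρ : ℝ) (dd uu : Fin J → ℝ) : Set (Finset (Fin J) → ℝ) :=
  {p | (∀ I, 0 ≤ p I) ∧ (∑ I, p I) = 1 ∧
    (∑ I, p I • vtx J dd uu I) = ρ • (1 : Fin J → ℝ)}

lemma feas_compact (ρ : ℝ) (dd uu : Fin J → ℝ) : IsCompact (Feas J ρ dd uu) := by
  have hsub : Feas J ρ dd uu ⊆ Set.Icc (0 : Finset (Fin J) → ℝ) 1 := by
    rintro p ⟨h0, h1, -⟩
    constructor
    · intro I; exact h0 I
    · intro I
      calc p I ≤ ∑ I', p I' := Finset.single_le_sum (fun I' _ => h0 I') (Finset.mem_univ I)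
      _ = 1 := h1
  have hclosed : IsClosed (Feas J ρ dd uu) := by
    have h1 : IsClosed {p : Finset (Fin J) → ℝ | ∀ I, 0 ≤ p I} := by
      have he : {p : Finset (Fin J) → ℝ | ∀ I, 0 ≤ p I} =
          ⋂ I, {p : Finset (Fin J) → ℝ | 0 ≤ p I} := by ext; simp
      rw [he]
      exact isClosed_iInter fun I => isClosed_le continuous_const (continuous_apply I)
    have h2 : IsClosed {p : Finset (Fin J) → ℝ | (∑ I, p I) = 1} :=
      isClosed_eq (by continuity) continuous_const
    have h3 : IsClosed {p : Finset (Fin J) → ℝ |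
        (∑ I, p I • vtx J dd uu I) = ρ • (1 : Fin J → ℝ)} := by
      refine isClosed_eq ?_ continuous_const
      exact continuous_finset_sum _ fun I _ => (continuous_apply I).smul continuous_const
    have he : Feas J ρ dd uu = {p : Finset (Fin J) → ℝ | ∀ I, 0 ≤ p I} ∩
        ({p | (∑ I, p I) = 1} ∩ {p | (∑ I, p I • vtx J dd uu I) = ρ • (1 : Fin J → ℝ)}) := by
      ext p; simp [Feas, Set.mem_inter_iff, and_assoc]
    rw [he]
    exact h1.inter (h2.inter h3)
  exact (isCompact_Icc).of_isClosed_subset hclosed hsub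





lemma reduce (ρ : ℝ) (dd uu : Fin J → ℝ) (a : Finset (Fin J) → ℝ) :
    ∀ n : ℕ, ∀ p : Finset (Fin J) → ℝ, p ∈ Feas J ρ dd uu →
    (∀ r ∈ Feas J ρ dd uu, ∑ I, r I * a I ≤ ∑ I, p I * a I) →
    (Finset.univ.filter (fun I => p I ≠ 0)).card ≤ n →
    ∃ q ∈ Feas J ρ dd uu, (∑ I, q I * a I) = (∑ I, p I * a I) ∧
      (Finset.univ.filter (fun I => q I ≠ 0)).card ≤ J + 1 := by
  intro n
  induction n with
  | zero =>
    intro p hp hmax hcard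
    exfalso
    have hempty : Finset.univ.filter (fun I => p I ≠ 0) = ∅ :=
      Finset.card_eq_zero.mp (Nat.le_zero.mp hcard)
    have hzero : ∀ I, p I = 0 := by
      intro I
      by_contra h
      have : I ∈ Finset.univ.filter (fun I => p I ≠ 0) := by simp [h]
      simp [hempty] at this
    have := hp.2.1
    rw [Finset.sum_eq_zero (fun I _ => hzero I)] at this
    norm_num at this
  | succ n ih =>
    intro p hp hmax hcard
    by_cases hc : (Finset.univ.filter (fun I => p I ≠ 0)).card ≤ J + 1
    · exact ⟨p, hp, rfl, hc⟩
    push_neg at hc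
    obtain ⟨T, hTsub, hTcard⟩ :=
      Finset.exists_subset_card_eq (s := Finset.univ.filter (fun I => p I ≠ 0)) (n := J + 2) (by omega)
    have hTne : T.Nonempty := Finset.card_pos.mp (by omega)
    have hppos : ∀ I ∈ T, 0 < p I := by
      intro I hI
      have h2 := (Finset.mem_filter.mp (hTsub hI)).2
      exact lt_of_le_of_ne (hp.1 I) (Ne.symm h2)
    set η : Finset (Fin J) → (Fin J → ℝ) × ℝ := fun I => (vtx J dd uu I, 1) with hη
    have hnli : ¬ LinearIndependent ℝ (fun i : ↥T => η ↑i) := by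
      intro hli
      have h1 := hli.fintype_card_le_finrank
      rw [Fintype.card_coe, hTcard] at h1
      have h2 : Module.finrank ℝ ((Fin J → ℝ) × ℝ) = J + 1 := by
        rw [Module.finrank_prod, Module.finrank_pi, Module.finrank_self, Fintype.card_fin]
      omega
    obtain ⟨g, hg0, i₁, hi₁⟩ := Fintype.not_linearIndependent_iff.mp hnli
    set lam : Finset (Fin J) → ℝ := fun I => if h : I ∈ T then g ⟨I, h⟩ else 0 with hlam
    have hlam_T : ∀ I ∉ T, lam I = 0 := fun I hI => dif_neg hI
    have hglam : ∀ i : ↥T, lam ↑i = g i := fun i => dif_pos i.2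
    have hηsum : ∑ I, lam I • η I = 0 := by
      rw [← Finset.sum_subset (Finset.subset_univ T)
        (fun I _ hI => by rw [hlam_T I hI, zero_smul])]
      rw [← Finset.sum_coe_sort T (fun I => lam I • η I)]
      rw [show (fun i : ↥T => lam ↑i • η ↑i) = fun i : ↥T => g i • η ↑i from
        funext fun i => by rw [hglam]]
      exact hg0
    have hlam_V : ∑ I, lam I • vtx J dd uu I = 0 := by
      have h4 := congrArg Prod.fst hηsum
      rw [Prod.fst_sum] at h4
      simpa using h4
    have hlam_1 : ∑ I, lam I = 0 := by
      have h4 := congrArg Prod.snd hηsum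
      rw [Prod.snd_sum] at h4
      simpa [hη] using h4
    have hlam_ne : lam ↑i₁ ≠ 0 := by rw [hglam]; exact hi₁
    -- key: no direction with positive objective gain
    have key : ∀ μ : Finset (Fin J) → ℝ, (∀ I ∉ T, μ I = 0) →
        (∑ I, μ I • vtx J dd uu I = 0) → (∑ I, μ I = 0) →
        0 < (∑ I, μ I * a I) → False := by
      intro μ hμT hμV hμ1 hμa
      set t₀ := T.inf' hTne (fun I => p I / (|μ I| + 1)) with ht₀def
      have ht₀pos : 0 < t₀ := by
        rw [Finset.lt_inf'_iff]
        intro I hI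
        exact div_pos (hppos I hI) (by positivity)
      have ht₀le : ∀ I ∈ T, t₀ * (|μ I| + 1) ≤ p I := by
        intro I hI
        have h1 := Finset.inf'_le (fun I => p I / (|μ I| + 1)) hI
        rw [le_div_iff₀ (by positivity)] at h1
        exact h1
      set r : Finset (Fin J) → ℝ := fun I => p I + t₀ * μ I with hrdef
      have hrfeas : r ∈ Feas J ρ dd uu := by
        refine ⟨?_, ?_, ?_⟩
        · intro I
          by_cases hI : I ∈ T
          · have h1 := ht₀le I hI
            have h2 : -|μ I| ≤ μ I := neg_abs_le (μ I)
            simp only [hrdef]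
            nlinarith
          · simp only [hrdef, hμT I hI]
            simpa using hp.1 I
        · have : ∑ I, r I = (∑ I, p I) + t₀ * ∑ I, μ I := by
            rw [Finset.mul_sum, ← Finset.sum_add_distrib]
          rw [this, hp.2.1, hμ1]; ring
        · have : ∑ I, r I • vtx J dd uu I
              = (∑ I, p I • vtx J dd uu I) + t₀ • (∑ I, μ I • vtx J dd uu I) := by
            rw [Finset.smul_sum, ← Finset.sum_add_distrib]
            refine Finset.sum_congr rfl fun I _ => ?_
            simp only [hrdef]
            rw [add_smul, smul_smul]
          rw [this, hp.2.2, hμV, smul_zero, add_zero]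
      have hobj : (∑ I, p I * a I) < ∑ I, r I * a I := by
        have h3 : ∑ I, r I * a I = (∑ I, p I * a I) + t₀ * (∑ I, μ I * a I) := by
          rw [Finset.mul_sum, ← Finset.sum_add_distrib]
          refine Finset.sum_congr rfl fun I _ => ?_
          simp only [hrdef]; ring
        rw [h3]
        nlinarith
      exact absurd (hmax r hrfeas) (not_le.mpr hobj)
    by_cases hSa : (∑ I, lam I * a I) = 0
    · -- support-reducing move
      have hex : ∃ I, 0 < lam I := by
        by_contra hco
        push_neg at hco
        have hall := (Finset.sum_eq_zero_iff_of_nonpos (fun I _ => hco I)).mp hlam_1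
        exact hlam_ne (hall _ (Finset.mem_univ _))
      set Tp := Finset.univ.filter (fun I => 0 < lam I) with hTp
      have hTpne : Tp.Nonempty := by
        obtain ⟨I, hI⟩ := hex
        exact ⟨I, by simp [hTp, hI]⟩
      have hpos : ∀ I ∈ Tp, 0 < lam I := fun I hI => (Finset.mem_filter.mp hI).2
      have hTpT : ∀ I ∈ Tp, I ∈ T := by
        intro I hI
        by_contra h
        exact absurd (hlam_T I h ▸ hpos I hI) (lt_irrefl 0)
      set ts := Tp.inf' hTpne (fun I => p I / lam I) with hts
      have htspos : 0 < ts := by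
        rw [hts, Finset.lt_inf'_iff]
        exact fun I hI => div_pos (hppos I (hTpT I hI)) (hpos I hI)
      set q : Finset (Fin J) → ℝ := fun I => p I - ts * lam I with hqdef
      have hq0 : ∀ I, 0 ≤ q I := by
        intro I
        by_cases hI : 0 < lam I
        · have hITp : I ∈ Tp := by simp [hTp, hI]
          have h1 := Finset.inf'_le (fun I => p I / lam I) hITp
          rw [le_div_iff₀ hI] at h1
          simp only [hqdef]; linarith
        · push_neg at hI
          have h2 : ts * lam I ≤ 0 := mul_nonpos_of_nonneg_of_nonpos htspos.le hI
          simp only [hqdef]; linarith [hp.1 I]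
      have hqfeas : q ∈ Feas J ρ dd uu := by
        refine ⟨hq0, ?_, ?_⟩
        · have h4 : ∑ I, q I = (∑ I, p I) - ts * ∑ I, lam I := by
            rw [Finset.mul_sum, ← Finset.sum_sub_distrib]
          rw [h4, hp.2.1, hlam_1]; ring
        · have h4 : ∑ I, q I • vtx J dd uu I
              = (∑ I, p I • vtx J dd uu I) - ts • (∑ I, lam I • vtx J dd uu I) := by
            rw [Finset.smul_sum, ← Finset.sum_sub_distrib]
            refine Finset.sum_congr rfl fun I _ => ?_
            simp only [hqdef]
            rw [sub_smul, smul_smul]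
          rw [h4, hp.2.2, hlam_V, smul_zero, sub_zero]
      have hqa : ∑ I, q I * a I = ∑ I, p I * a I := by
        have h4 : ∑ I, q I * a I = (∑ I, p I * a I) - ts * ∑ I, lam I * a I := by
          rw [Finset.mul_sum, ← Finset.sum_sub_distrib]
          refine Finset.sum_congr rfl fun I _ => ?_
          simp only [hqdef]; ring
        rw [h4, hSa]; ring
      obtain ⟨Im, hIm, hImeq⟩ := Finset.exists_mem_eq_inf' hTpne (fun I => p I / lam I)
      have hqIm : q Im = 0 := by
        have hlamIm := hpos Im hIm
        simp only [hqdef]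
        rw [← hts] at hImeq
        rw [hImeq]
        field_simp
        ring
      have hsub : Finset.univ.filter (fun I => q I ≠ 0) ⊆
          (Finset.univ.filter (fun I => p I ≠ 0)).erase Im := by
        intro I hI
        rw [Finset.mem_erase]
        have hqI := (Finset.mem_filter.mp hI).2
        constructor
        · rintro rfl; exact hqI hqIm
        · refine Finset.mem_filter.mpr ⟨Finset.mem_univ _, ?_⟩
          intro hpI
          have hIT : I ∉ T := fun h => (hppos I h).ne' hpI
          exact hqI (by simp [hqdef, hpI, hlam_T I hIT])
      have hcard' : (Finset.univ.filter (fun I => q I ≠ 0)).card ≤ n := by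
        have h1 := Finset.card_le_card hsub
        have h2 : Im ∈ Finset.univ.filter (fun I => p I ≠ 0) := hTsub (hTpT Im hIm)
        have h3 := Finset.card_erase_of_mem h2
        omega
      obtain ⟨q', hq', hq'a, hq'card⟩ :=
        ih q hqfeas (fun r hr => (hmax r hr).trans_eq hqa.symm) hcard'
      exact ⟨q', hq', by rw [hq'a, hqa], hq'card⟩
    · rcases lt_or_gt_of_ne hSa with h | h
      · refine (key (fun I => -lam I) (fun I hI => by simp [hlam_T I hI]) ?_ ?_ ?_).elim
        · simp only [neg_smul, Finset.sum_neg_distrib, hlam_V, neg_zero]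
        · simp only [Finset.sum_neg_distrib, hlam_1, neg_zero]
        · have h5 : ∑ I, -lam I * a I = -∑ I, lam I * a I := by
            rw [← Finset.sum_neg_distrib]
            exact Finset.sum_congr rfl fun I _ => by ring
          rw [h5]
          linarith
      · exact (key lam hlam_T hlam_V hlam_1 h).elim

lemma univ_ne : (Finset.univ : Finset (Finset (Fin J))).Nonempty := ⟨∅, Finset.mem_univ ∅⟩

lemma sup_eq {ρ : ℝ} {dd uu z : Fin J → ℝ} {f : (Fin J → ℝ) → ℝ}
    (hd : ∀ j, 0 < dd j) (hdu : ∀ j, dd j ≤ uu j) (hz : ∀ j, 0 < z j)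
    (hconv : ConvexOn ℝ { z : Fin J → ℝ | ∀ i, 0 ≤ z i } f) (γ : Fin J → ℝ) :
    (⨆ ξ : { ξ : Fin J → ℝ // ∀ j, ξ j ∈ Set.Icc (dd j) (uu j) },
      (f (fun j => ξ.1 j * z j) - ∑ j, γ j * (ξ.1 j * z j - ρ * z j)))
    = Finset.univ.sup' univ_ne (fun I => f (fun j => vtx J dd uu I j * z j) -
        ∑ j, γ j * (vtx J dd uu I j * z j - ρ * z j)) := by
  haveI hne : Nonempty { ξ : Fin J → ℝ // ∀ j, ξ j ∈ Set.Icc (dd j) (uu j) } :=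
    ⟨⟨dd, fun j => ⟨le_refl _, hdu j⟩⟩⟩
  set g : (Fin J → ℝ) → ℝ :=
    fun ξ => f (fun j => ξ j * z j) - ∑ j, γ j * (ξ j * z j - ρ * z j) with hg
  set mval : ℝ := Finset.univ.sup' univ_ne (fun I => f (fun j => vtx J dd uu I j * z j) -
    ∑ j, γ j * (vtx J dd uu I j * z j - ρ * z j)) with hmval
  have hgconv : ConvexOn ℝ (convexHull ℝ (Set.range (vtx J dd uu))) g := by
    refine ⟨convex_convexHull _ _, ?_⟩
    intro x hx y hy α β hα hβ hαβ
    have hbx := hull_subset_box hdu hx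
    have hby := hull_subset_box hdu hy
    have hmx : (fun j => x j * z j) ∈ { z : Fin J → ℝ | ∀ i, 0 ≤ z i } :=
      fun j => mul_nonneg ((hd j).le.trans (hbx j).1) (hz j).le
    have hmy : (fun j => y j * z j) ∈ { z : Fin J → ℝ | ∀ i, 0 ≤ z i } :=
      fun j => mul_nonneg ((hd j).le.trans (hby j).1) (hz j).le
    have hfx := hconv.2 hmx hmy hα hβ hαβ
    have heq : (fun j => (α • x + β • y) j * z j)
        = α • (fun j => x j * z j) + β • (fun j => y j * z j) := by
      funext j
      simp only [Pi.add_apply, Pi.smul_apply, smul_eq_mul]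
      ring
    have hlin : ∑ j, γ j * ((α • x + β • y) j * z j - ρ * z j)
        = α * (∑ j, γ j * (x j * z j - ρ * z j))
          + β * (∑ j, γ j * (y j * z j - ρ * z j)) := by
      rw [Finset.mul_sum, Finset.mul_sum, ← Finset.sum_add_distrib]
      refine Finset.sum_congr rfl fun j _ => ?_
      simp only [Pi.add_apply, Pi.smul_apply, smul_eq_mul]
      linear_combination (γ j * ρ * z j) * hαβ
    show g (α • x + β • y) ≤ α • g x + β • g y
    have hfx2 := hconv.2 hmx hmy hα hβ hαβ
    rw [← heq] at hfx2
    simp only [hg, smul_eq_mul] at hfx2 ⊢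
    linarith [hlin]
  have pb : ∀ ξ : { ξ : Fin J → ℝ // ∀ j, ξ j ∈ Set.Icc (dd j) (uu j) }, g ξ.1 ≤ mval := by
    intro ξ
    obtain ⟨yv, hyv, hge⟩ := hgconv.exists_ge_of_mem_convexHull (subset_convexHull ℝ _)
      (box_subset_hull hdu ξ.1 ξ.2)
    obtain ⟨I, rfl⟩ := hyv
    refine hge.trans ?_
    rw [hmval]
    exact Finset.le_sup' (fun I => f (fun j => vtx J dd uu I j * z j) -
      ∑ j, γ j * (vtx J dd uu I j * z j - ρ * z j)) (Finset.mem_univ I)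
  apply le_antisymm
  · exact ciSup_le pb
  · obtain ⟨I₀, -, hI₀⟩ := Finset.exists_mem_eq_sup' univ_ne (fun I =>
      f (fun j => vtx J dd uu I j * z j) - ∑ j, γ j * (vtx J dd uu I j * z j - ρ * z j))
    rw [hmval, hI₀]
    exact le_ciSup_of_le ⟨mval, by rintro x ⟨ξ, rfl⟩; exact pb ξ⟩
      ⟨vtx J dd uu I₀, vtx_mem_box hdu I₀⟩ (le_refl _)

lemma weak_duality {ρ : ℝ} {dd uu z : Fin J → ℝ} (a : Finset (Fin J) → ℝ)
    (p : Finset (Fin J) → ℝ) (hp0 : ∀ I, 0 ≤ p I) (hp1 : (∑ I, p I) = 1)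
    (hpV : (∑ I, p I • vtx J dd uu I) = ρ • (1 : Fin J → ℝ)) (γ : Fin J → ℝ) :
    ∑ I, p I * a I ≤ Finset.univ.sup' univ_ne
      (fun I => a I - ∑ j, γ j * (vtx J dd uu I j * z j - ρ * z j)) := by
  set mval : ℝ := Finset.univ.sup' univ_ne
    (fun I => a I - ∑ j, γ j * (vtx J dd uu I j * z j - ρ * z j)) with hmval
  have hlin0 : ∀ j, ∑ I, p I * (vtx J dd uu I j * z j - ρ * z j) = 0 := by
    intro j
    have hvj : ∑ I, p I * vtx J dd uu I j = ρ := by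
      have h1 := congrFun hpV j
      simp only [Finset.sum_apply, Pi.smul_apply, Pi.one_apply, smul_eq_mul, mul_one] at h1
      exact h1
    have h2 : ∀ I : Finset (Fin J), p I * (vtx J dd uu I j * z j - ρ * z j)
        = (p I * vtx J dd uu I j) * z j - p I * (ρ * z j) := fun I => by ring
    rw [Finset.sum_congr rfl (fun I _ => h2 I), Finset.sum_sub_distrib,
      ← Finset.sum_mul, ← Finset.sum_mul, hvj, hp1]
    ring
  have hswap : ∑ I, p I * (∑ j, γ j * (vtx J dd uu I j * z j - ρ * z j)) = 0 := by
    calc ∑ I, p I * (∑ j, γ j * (vtx J dd uu I j * z j - ρ * z j))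
        = ∑ I, ∑ j, γ j * (p I * (vtx J dd uu I j * z j - ρ * z j)) := by
          refine Finset.sum_congr rfl fun I _ => ?_
          rw [Finset.mul_sum]
          exact Finset.sum_congr rfl fun j _ => by ring
      _ = ∑ j, ∑ I, γ j * (p I * (vtx J dd uu I j * z j - ρ * z j)) := Finset.sum_comm
      _ = ∑ j, γ j * ∑ I, p I * (vtx J dd uu I j * z j - ρ * z j) := by
          refine Finset.sum_congr rfl fun j _ => ?_
          rw [Finset.mul_sum]
      _ = 0 := by simp [hlin0]
  have hsplit : ∑ I, p I * a I
      = ∑ I, p I * (a I - ∑ j, γ j * (vtx J dd uu I j * z j - ρ * z j)) := by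
    rw [show ∑ I, p I * (a I - ∑ j, γ j * (vtx J dd uu I j * z j - ρ * z j))
      = (∑ I, p I * a I) - ∑ I, p I * (∑ j, γ j * (vtx J dd uu I j * z j - ρ * z j)) by
        rw [← Finset.sum_sub_distrib]
        exact Finset.sum_congr rfl fun I _ => by ring]
    rw [hswap]
    ring
  rw [hsplit]
  calc ∑ I, p I * (a I - ∑ j, γ j * (vtx J dd uu I j * z j - ρ * z j))
      ≤ ∑ I, p I * mval := by
        refine Finset.sum_le_sum fun I _ => ?_
        refine mul_le_mul_of_nonneg_left ?_ (hp0 I)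
        rw [hmval]
        exact Finset.le_sup' (fun I => a I -
          ∑ j, γ j * (vtx J dd uu I j * z j - ρ * z j)) (Finset.mem_univ I)
    _ = mval := by rw [← Finset.sum_mul, hp1, one_mul]





lemma dual_eps {ρ : ℝ} {dd uu z : Fin J → ℝ} (hdu : ∀ j, dd j ≠ uu j) (hz : ∀ j, 0 < z j)
    (a : Finset (Fin J) → ℝ) (pstar : Finset (Fin J) → ℝ)
    (hps : pstar ∈ Feas J ρ dd uu)
    (hmax : ∀ r ∈ Feas J ρ dd uu, ∑ I, r I * a I ≤ ∑ I, pstar I * a I)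
    {ε : ℝ} (hε : 0 < ε) :
    ∃ γ : Fin J → ℝ, ∀ I, a I - ∑ j, γ j * (vtx J dd uu I j * z j - ρ * z j)
      ≤ (∑ I, pstar I * a I) + ε := by
  classical
  set M : ℝ := ∑ I, pstar I * a I with hM
  set wv : Finset (Fin J) → Fin J → ℝ :=
    fun I => fun j => vtx J dd uu I j * z j - ρ * z j with hwv
  set gI : Finset (Fin J) → (Fin J → ℝ) × ℝ := fun I => (wv I, a I) with hgI
  have ginj : Function.Injective gI := by
    intro I I' hII
    have h1 : wv I = wv I' := congrArg Prod.fst hII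
    apply vtx_inj hdu
    funext j
    have h2 := congrFun h1 j
    simp only [hwv] at h2
    have h3 : vtx J dd uu I j * z j = vtx J dd uu I' j * z j := by linarith
    exact mul_right_cancel₀ (hz j).ne' h3
  set K := convexHull ℝ (Set.range gI) with hK
  have hKcomp : IsCompact K := (Set.finite_range gI).isCompact_convexHull (𝕜 := ℝ)
  -- the linear constraint satisfied by feasible p
  have hfeas_wv : ∀ p : Finset (Fin J) → ℝ, p ∈ Feas J ρ dd uu →
      ∑ I, p I • wv I = 0 := by
    intro p hp
    funext j
    rw [Finset.sum_apply]
    simp only [Pi.smul_apply, smul_eq_mul, hwv]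
    have hvj : ∑ I, p I * vtx J dd uu I j = ρ := by
      have h1 := congrFun hp.2.2 j
      simp only [Finset.sum_apply, Pi.smul_apply, Pi.one_apply, smul_eq_mul, mul_one] at h1
      exact h1
    have h2 : ∀ I : Finset (Fin J), p I * (vtx J dd uu I j * z j - ρ * z j)
        = (p I * vtx J dd uu I j) * z j - p I * (ρ * z j) := fun I => by ring
    rw [Finset.sum_congr rfl (fun I _ => h2 I), Finset.sum_sub_distrib,
      ← Finset.sum_mul, ← Finset.sum_mul, hvj, hp.2.1]
    simp
  have hMmem : (((0 : Fin J → ℝ), M) : (Fin J → ℝ) × ℝ) ∈ K := by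
    have hcm := Finset.centerMass_mem_convexHull Finset.univ (fun I _ => hps.1 I)
      (by rw [hps.2.1]; norm_num) (fun I _ => (Set.mem_range_self I : gI I ∈ Set.range gI))
    rw [Finset.centerMass_eq_of_sum_1 _ _ hps.2.1] at hcm
    have hsum : ∑ I, pstar I • gI I = (((0 : Fin J → ℝ), M) : (Fin J → ℝ) × ℝ) := by
      refine Prod.ext_iff.mpr ⟨?_, ?_⟩
      · rw [Prod.fst_sum]
        simp only [hgI, Prod.smul_fst]
        exact hfeas_wv pstar hps
      · rw [Prod.snd_sum]
        simp only [hgI, Prod.smul_snd, smul_eq_mul]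
        rfl
    rwa [hsum] at hcm
  have hnot : (((0 : Fin J → ℝ), M + ε) : (Fin J → ℝ) × ℝ) ∉ K := by
    intro hmem
    obtain ⟨p, hp0, hp1, hpsum⟩ := extract gI ginj hmem
    have hfst := congrArg Prod.fst hpsum
    rw [Prod.fst_sum] at hfst
    simp only [hgI, Prod.smul_fst] at hfst
    have hsnd := congrArg Prod.snd hpsum
    rw [Prod.snd_sum] at hsnd
    simp only [hgI, Prod.smul_snd, smul_eq_mul] at hsnd
    have hpfeas : p ∈ Feas J ρ dd uu := by
      refine ⟨hp0, hp1, ?_⟩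
      funext j
      have h1 := congrFun hfst j
      rw [Finset.sum_apply] at h1
      simp only [Pi.smul_apply, smul_eq_mul, hwv, Pi.zero_apply] at h1
      have h2 : ∀ I : Finset (Fin J), p I * (vtx J dd uu I j * z j - ρ * z j)
          = (p I * vtx J dd uu I j) * z j - p I * (ρ * z j) := fun I => by ring
      rw [Finset.sum_congr rfl (fun I _ => h2 I), Finset.sum_sub_distrib,
        ← Finset.sum_mul, ← Finset.sum_mul, hp1] at h1
      have h3 : (∑ I, p I * vtx J dd uu I j) * z j = ρ * z j := by linarith
      have h4 : ∑ I, p I * vtx J dd uu I j = ρ := mul_right_cancel₀ (hz j).ne' h3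
      rw [Finset.sum_apply]
      simp only [Pi.smul_apply, smul_eq_mul, Pi.one_apply, mul_one]
      exact h4
    have := hmax p hpfeas
    rw [hsnd] at this
    linarith
  obtain ⟨l, u, hlK, hlx⟩ := geometric_hahn_banach_closed_point
    (convex_convexHull ℝ _) hKcomp.isClosed hnot
  set c : ℝ := l ((0 : Fin J → ℝ), (1 : ℝ)) with hc
  have hsm : ∀ t : ℝ, l (((0 : Fin J → ℝ), t) : (Fin J → ℝ) × ℝ) = t * c := by
    intro t
    have h1 : (((0 : Fin J → ℝ), t) : (Fin J → ℝ) × ℝ)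
        = t • (((0 : Fin J → ℝ), (1 : ℝ)) : (Fin J → ℝ) × ℝ) := by
      simp [Prod.smul_mk]
    rw [h1, map_smul, smul_eq_mul, hc]
  have hMl : M * c < u := by
    have h1 := hlK _ hMmem
    rwa [hsm] at h1
  have hMε : u < (M + ε) * c := by
    have h1 := hlx
    rwa [hsm] at h1
  have hcpos : 0 < c := by nlinarith
  refine ⟨fun j => -(l ((Pi.single j (1 : ℝ) : Fin J → ℝ), (0 : ℝ))) / c, fun I => ?_⟩
  have hlI : l (gI I) < (M + ε) * c :=
    (hlK _ (subset_convexHull ℝ _ (Set.mem_range_self I))).trans hMε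
  have hdec : gI I = (∑ j, wv I j • (((Pi.single j (1 : ℝ) : Fin J → ℝ), (0 : ℝ))
      : (Fin J → ℝ) × ℝ)) + (((0 : Fin J → ℝ), a I) : (Fin J → ℝ) × ℝ) := by
    refine Prod.ext_iff.mpr ⟨?_, ?_⟩
    · rw [Prod.fst_add, Prod.fst_sum]
      simp only [Prod.smul_fst]
      funext j'
      rw [Pi.add_apply, Finset.sum_apply]
      simp only [Pi.smul_apply, smul_eq_mul, Pi.single_apply, Pi.zero_apply, mul_ite,
        mul_one, mul_zero, add_zero]
      simp [Finset.sum_ite_eq, Finset.sum_ite_eq', hgI]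
    · rw [Prod.snd_add, Prod.snd_sum]
      simp [hgI]
  have hlval : l (gI I) = (∑ j, wv I j * l (((Pi.single j (1 : ℝ) : Fin J → ℝ), (0 : ℝ))
      : (Fin J → ℝ) × ℝ)) + a I * c := by
    rw [hdec, map_add, map_sum]
    congr 1
    · exact Finset.sum_congr rfl fun j _ => by rw [map_smul, smul_eq_mul]
    · rw [hsm]
  set S : ℝ := ∑ j, wv I j * l (((Pi.single j (1 : ℝ) : Fin J → ℝ), (0 : ℝ))
    : (Fin J → ℝ) × ℝ) with hS
  have hγs : ∑ j, (-(l (((Pi.single j (1 : ℝ) : Fin J → ℝ), (0 : ℝ))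
      : (Fin J → ℝ) × ℝ)) / c) * (vtx J dd uu I j * z j - ρ * z j) = -(S / c) := by
    have h6 : ∀ j : Fin J, (-(l (((Pi.single j (1 : ℝ) : Fin J → ℝ), (0 : ℝ))
        : (Fin J → ℝ) × ℝ)) / c) * (vtx J dd uu I j * z j - ρ * z j)
        = (-(wv I j * l (((Pi.single j (1 : ℝ) : Fin J → ℝ), (0 : ℝ))
        : (Fin J → ℝ) × ℝ))) / c := by
      intro j
      simp only [hwv]
      ring
    rw [Finset.sum_congr rfl (fun j _ => h6 j), ← Finset.sum_div,
      Finset.sum_neg_distrib, ← hS, neg_div]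
  have h7 : a I + S / c ≤ M + ε := by
    rw [show a I + S / c = (a I * c + S) / c by field_simp]
    rw [div_le_iff₀ hcpos]
    nlinarith [hlI, hlval]
  calc a I - ∑ j, (-(l (((Pi.single j (1 : ℝ) : Fin J → ℝ), (0 : ℝ))
      : (Fin J → ℝ) × ℝ)) / c) * (vtx J dd uu I j * z j - ρ * z j)
      = a I + S / c := by rw [hγs]; ring
    _ ≤ M + ε := h7



lemma interior_mem {ρ : ℝ} {dd uu : Fin J → ℝ}
    (hgen : ∀ Is : Fin J → Finset (Fin J), Function.Injective Is →
      LinearIndependent ℝ (fun m => vtx J dd uu (Is m) - ρ • (1 : Fin J → ℝ)))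
    (Ω : Finset (Finset (Fin J))) (hΩcard : Ω.card = J + 1)
    (q : Finset (Fin J) → ℝ) (hq0 : ∀ I, 0 ≤ q I) (hqΩ : ∀ I ∉ Ω, q I = 0)
    (hqsupp : ∀ I ∈ Ω, q I ≠ 0)
    (hq1 : (∑ I, q I) = 1) (hqV : (∑ I, q I • vtx J dd uu I) = ρ • (1 : Fin J → ℝ)) :
    (ρ • (1 : Fin J → ℝ)) ∈ interior (convexHull ℝ (vtx J dd uu '' Ω)) := by
  classical
  have hΩne : Ω.Nonempty := Finset.card_pos.mp (by omega)
  haveI : Nonempty ↥Ω := ⟨⟨hΩne.choose, hΩne.choose_spec⟩⟩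
  set P : ↥Ω → (Fin J → ℝ) := fun i => vtx J dd uu ↑i with hP
  -- generic restriction fact
  have hrestr1 : ∀ lam : Finset (Fin J) → ℝ, (∀ I ∉ Ω, lam I = 0) →
      ∑ I, lam I = ∑ i : ↥Ω, lam ↑i := by
    intro lam h0
    rw [Finset.sum_coe_sort Ω (fun I => lam I)]
    exact (Finset.sum_subset (Finset.subset_univ Ω) (fun I _ hI => h0 I hI)).symm
  have hrestr2 : ∀ lam : Finset (Fin J) → ℝ, (∀ I ∉ Ω, lam I = 0) →
      ∑ I, lam I • vtx J dd uu I = ∑ i : ↥Ω, lam ↑i • vtx J dd uu ↑i := by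
    intro lam h0
    rw [Finset.sum_coe_sort Ω (fun I => lam I • vtx J dd uu I)]
    exact (Finset.sum_subset (Finset.subset_univ Ω)
      (fun I _ hI => by rw [h0 I hI, zero_smul])).symm
  have hq1' : ∑ i : ↥Ω, q ↑i = 1 := by rw [← hrestr1 q hqΩ, hq1]
  -- the core coefficient-killing argument
  have hkill : ∀ lam : Finset (Fin J) → ℝ, (∀ I ∉ Ω, lam I = 0) →
      (∑ I, lam I = 0) → (∑ I, lam I • vtx J dd uu I = 0) → ∀ I, lam I = 0 := by
    intro lam h0 h1 hV
    obtain ⟨I₀, hI₀⟩ := hΩne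
    set t : ℝ := lam I₀ / q I₀ with ht
    set μ : Finset (Fin J) → ℝ := fun I => lam I - t * q I with hμ
    have hqne := hqsupp I₀ hI₀
    have hμI₀ : μ I₀ = 0 := by
      simp only [hμ, ht]
      field_simp
      ring
    have hμΩ : ∀ I ∉ Ω, μ I = 0 := by
      intro I hI
      simp only [hμ, h0 I hI, hqΩ I hI]
      ring
    have hzero : ∀ I ∈ Finset.univ, I ∉ Ω.erase I₀ →
        μ I • (vtx J dd uu I - ρ • (1 : Fin J → ℝ)) = 0 := by
      intro I _ hI
      rw [Finset.mem_erase] at hI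
      push_neg at hI
      by_cases hIΩ : I ∈ Ω
      · by_cases hII₀ : I = I₀
        · rw [hII₀, hμI₀, zero_smul]
        · rw [hμΩ I (hI hII₀), zero_smul]
      · rw [hμΩ I hIΩ, zero_smul]
    have hμsum' : ∑ I, μ I • (vtx J dd uu I - ρ • (1 : Fin J → ℝ)) = 0 := by
      have e1 : ∑ I, μ I • vtx J dd uu I = - (t • (ρ • (1 : Fin J → ℝ))) := by
        have : ∀ I : Finset (Fin J), μ I • vtx J dd uu I
            = lam I • vtx J dd uu I - t • (q I • vtx J dd uu I) := by
          intro I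
          simp only [hμ]
          rw [sub_smul, smul_smul]
        rw [Finset.sum_congr rfl (fun I _ => this I), Finset.sum_sub_distrib,
          ← Finset.smul_sum, hV, hqV, zero_sub]
      have e2 : ∑ I, μ I = -t := by
        have : ∀ I : Finset (Fin J), μ I = lam I - t * q I := fun I => rfl
        rw [Finset.sum_congr rfl (fun I _ => this I), Finset.sum_sub_distrib,
          ← Finset.mul_sum, h1, hq1, zero_sub, mul_one]
      have e3 : ∀ I : Finset (Fin J), μ I • (vtx J dd uu I - ρ • (1 : Fin J → ℝ))
          = μ I • vtx J dd uu I - μ I • (ρ • (1 : Fin J → ℝ)) := fun I => smul_sub _ _ _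
      rw [Finset.sum_congr rfl (fun I _ => e3 I), Finset.sum_sub_distrib, e1,
        ← Finset.sum_smul, e2, neg_smul]
      ring_nf
    have hμsum : ∑ I ∈ Ω.erase I₀, μ I • (vtx J dd uu I - ρ • (1 : Fin J → ℝ)) = 0 := by
      rw [Finset.sum_subset (Finset.subset_univ (Ω.erase I₀)) hzero]
      exact hμsum'
    have hcard : (Ω.erase I₀).card ≤ J := by
      rw [Finset.card_erase_of_mem hI₀, hΩcard]
      omega
    have hμ0 := zero_coeffs hgen (Ω.erase I₀) hcard μ hμsum
    have hlamq : ∀ I ∈ Ω, lam I = t * q I := by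
      intro I hIΩ
      by_cases hII₀ : I = I₀
      · subst hII₀
        rw [ht]
        field_simp
      · have := hμ0 I (Finset.mem_erase.mpr ⟨hII₀, hIΩ⟩)
        simp only [hμ] at this
        linarith
    have ht0 : t = 0 := by
      have e4 : ∑ i : ↥Ω, lam ↑i = t := by
        have e5 : ∀ i : ↥Ω, lam ↑i = t * q ↑i := fun i => hlamq i.1 i.2
        rw [Finset.sum_congr rfl (fun i _ => e5 i), ← Finset.mul_sum, hq1', mul_one]
      rw [← e4, ← hrestr1 lam h0, h1]
    intro I
    by_cases hIΩ : I ∈ Ω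
    · rw [hlamq I hIΩ, ht0, zero_mul]
    · exact h0 I hIΩ
  -- affine independence
  have hAI : AffineIndependent ℝ P := by
    rw [affineIndependent_iff]
    intro s cw hw0 hwc
    set cw' : ↥Ω → ℝ := fun i => if i ∈ s then cw i else 0 with hcw'
    set lam : Finset (Fin J) → ℝ := fun I => if h : I ∈ Ω then cw' ⟨I, h⟩ else 0 with hlam
    have hlamΩ : ∀ I ∉ Ω, lam I = 0 := fun I hI => dif_neg hI
    have hlamc : ∀ i : ↥Ω, lam ↑i = cw' i := by
      intro i
      simp only [hlam]
      rw [dif_pos i.2]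
    have hlam1 : ∑ I, lam I = 0 := by
      rw [hrestr1 lam hlamΩ, Finset.sum_congr rfl (fun i _ => hlamc i), hcw']
      rw [Finset.sum_ite_mem, Finset.univ_inter]
      exact hw0
    have hlamV : ∑ I, lam I • vtx J dd uu I = 0 := by
      rw [hrestr2 lam hlamΩ,
        Finset.sum_congr rfl (fun i _ => by rw [hlamc i])]
      have : ∑ i : ↥Ω, cw' i • vtx J dd uu ↑i = ∑ i ∈ s, cw i • P i := by
        simp only [hcw', ite_smul, zero_smul, hP]
        rw [Finset.sum_ite_mem, Finset.univ_inter]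
      rw [this, hwc]
    have hall := hkill lam hlamΩ hlam1 hlamV
    intro e he
    have := hall ↑e
    rw [hlamc e, hcw'] at this
    simpa [he] using this
  -- spanning
  have hcardΩ : Fintype.card ↥Ω = J + 1 := by rw [Fintype.card_coe, hΩcard]
  have hspan : affineSpan ℝ (Set.range P) = ⊤ := by
    rw [hAI.affineSpan_eq_top_iff_card_eq_finrank_add_one, hcardΩ]
    congr 1
    rw [Module.finrank_pi, Fintype.card_fin]
  set b : AffineBasis ↥Ω ℝ (Fin J → ℝ) := ⟨P, hAI, hspan⟩ with hb
  have hbco : ⇑b = P := rfl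
  have himg : vtx J dd uu '' ↑Ω = Set.range ⇑b := by
    rw [hbco]
    ext x
    simp only [Set.mem_image, Set.mem_range, Finset.mem_coe]
    constructor
    · rintro ⟨I, hI, rfl⟩
      exact ⟨⟨I, hI⟩, rfl⟩
    · rintro ⟨⟨I, hI⟩, rfl⟩
      exact ⟨I, hI, rfl⟩
  rw [himg, b.interior_convexHull]
  have hcomb : Finset.univ.affineCombination ℝ ⇑b (fun i : ↥Ω => q ↑i)
      = ρ • (1 : Fin J → ℝ) := by
    rw [Finset.affineCombination_eq_linear_combination _ _ _ hq1']
    rw [hbco, ← hrestr2 q hqΩ]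
    exact hqV
  intro i
  have hcoord : b.coord i (ρ • (1 : Fin J → ℝ)) = q ↑i := by
    rw [← hcomb]
    exact b.coord_apply_combination_of_mem (Finset.mem_univ i) hq1'
  show 0 < b.coord i (ρ • (1 : Fin J → ℝ))
  rw [hcoord]
  exact lt_of_le_of_ne (hq0 ↑i) (Ne.symm (hqsupp ↑i i.2))

end S15

theorem stmt15 (J : ℕ) (ρ : ℝ) (dd uu : Fin J → ℝ)
    (hd : ∀ i, 0 < dd i) (hdρ : ∀ i, dd i < ρ) (hρu : ∀ i, ρ < uu i)
    (f : (Fin J → ℝ) → ℝ)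
    (hconv : ConvexOn ℝ { z : Fin J → ℝ | ∀ i, 0 ≤ z i } f)
    -- the vertices are in general position: for any J pairwise distinct subsets
    -- I₁,…,I_J the vectors ξ_{I_k} − ρ𝟙 are linearly independent
    (hgen : ∀ Is : Fin J → Finset (Fin J), Function.Injective Is →
      LinearIndependent ℝ (fun m => vtx J dd uu (Is m) - ρ • (1 : Fin J → ℝ)))
    (z : Fin J → ℝ) (hz : ∀ j, 0 < z j) :
    IsGreatest { y : ℝ | ∃ Ω : Finset (Finset (Fin J)), Ω.card = J + 1 ∧
        (ρ • (1 : Fin J → ℝ)) ∈ interior (convexHull ℝ (vtx J dd uu '' Ω)) ∧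
        ∃ p : Finset (Fin J) → ℝ, (∀ I, 0 ≤ p I) ∧ (∀ I ∉ Ω, p I = 0) ∧
          (∑ I : Finset (Fin J), p I) = 1 ∧
          -- risk-neutrality with respect to ρ𝟙
          (∑ I : Finset (Fin J), p I • vtx J dd uu I) = ρ • (1 : Fin J → ℝ) ∧
          y = ∑ I : Finset (Fin J), p I * f (fun j => vtx J dd uu I j * z j) }
      (Bop J ρ dd uu f z) := by
  classical
  have hdu : ∀ j, dd j ≤ uu j := fun j => ((hdρ j).trans (hρu j)).le
  have hdne : ∀ j, dd j ≠ uu j := fun j => ((hdρ j).trans (hρu j)).ne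
  set a : Finset (Fin J) → ℝ := fun I => f (fun j => vtx J dd uu I j * z j) with ha
  -- the feasible set is nonempty
  have hρbox : ∀ j, (ρ • (1 : Fin J → ℝ)) j ∈ Set.Icc (dd j) (uu j) := by
    intro j
    simp only [Pi.smul_apply, Pi.one_apply, smul_eq_mul, mul_one]
    exact ⟨(hdρ j).le, (hρu j).le⟩
  obtain ⟨p₀, hp₀0, hp₀1, hp₀V⟩ := S15.extract (vtx J dd uu) (S15.vtx_inj hdne)
    (S15.box_subset_hull hdu _ hρbox)
  have hp₀ : p₀ ∈ S15.Feas J ρ dd uu := ⟨hp₀0, hp₀1, hp₀V⟩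
  -- a maximizer over the feasible set
  have hcont : Continuous (fun p : Finset (Fin J) → ℝ => ∑ I, p I * a I) :=
    continuous_finset_sum _ fun I _ => (continuous_apply I).mul continuous_const
  obtain ⟨pstar, hpstar, hmaxOn⟩ := (S15.feas_compact ρ dd uu).exists_isMaxOn
    ⟨p₀, hp₀⟩ hcont.continuousOn
  have hmax : ∀ r ∈ S15.Feas J ρ dd uu, ∑ I, r I * a I ≤ ∑ I, pstar I * a I :=
    fun r hr => hmaxOn hr
  -- reduce the support
  obtain ⟨q, hq, hqM, hqcard⟩ := S15.reduce ρ dd uu a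
    (Finset.univ.filter (fun I => pstar I ≠ 0)).card pstar hpstar hmax (le_refl _)
  -- support has exactly J+1 elements
  have hsuppge : J + 1 ≤ (Finset.univ.filter (fun I => q I ≠ 0)).card := by
    by_contra hco
    push_neg at hco
    have hcardle : (Finset.univ.filter (fun I => q I ≠ 0)).card ≤ J := by omega
    have hsum0 : ∑ I ∈ Finset.univ.filter (fun I => q I ≠ 0),
        q I • (vtx J dd uu I - ρ • (1 : Fin J → ℝ)) = 0 := by
      rw [Finset.sum_subset (Finset.subset_univ _)
        (fun I _ hI => by
          have : q I = 0 := by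
            by_contra h
            exact hI (Finset.mem_filter.mpr ⟨Finset.mem_univ _, h⟩)
          rw [this, zero_smul])]
      have e1 : ∀ I : Finset (Fin J), q I • (vtx J dd uu I - ρ • (1 : Fin J → ℝ))
          = q I • vtx J dd uu I - q I • (ρ • (1 : Fin J → ℝ)) := fun I => smul_sub _ _ _
      rw [Finset.sum_congr rfl (fun I _ => e1 I), Finset.sum_sub_distrib,
        ← Finset.sum_smul, hq.2.1, hq.2.2, one_smul, sub_self]
    have hz0 := S15.zero_coeffs hgen _ hcardle q hsum0
    have hall : ∀ I, q I = 0 := by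
      intro I
      by_cases hI : q I ≠ 0
      · exact hz0 I (Finset.mem_filter.mpr ⟨Finset.mem_univ _, hI⟩)
      · push_neg at hI; exact hI
    have := hq.2.1
    rw [Finset.sum_eq_zero (fun I _ => hall I)] at this
    norm_num at this
  have hqcard' : (Finset.univ.filter (fun I => q I ≠ 0)).card = J + 1 :=
    le_antisymm hqcard hsuppge
  set Ω : Finset (Finset (Fin J)) := Finset.univ.filter (fun I => q I ≠ 0) with hΩ
  have hqΩ : ∀ I ∉ Ω, q I = 0 := by
    intro I hI
    by_contra h
    exact hI (Finset.mem_filter.mpr ⟨Finset.mem_univ _, h⟩)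
  have hqsupp : ∀ I ∈ Ω, q I ≠ 0 := fun I hI => (Finset.mem_filter.mp hI).2
  -- the value of the Bellman operator
  have hsup := fun γ => S15.sup_eq (ρ := ρ) (z := z) (f := f) hd hdu hz hconv γ
  have hwq : ∀ γ : Fin J → ℝ, ∑ I, q I * a I ≤ Finset.univ.sup' S15.univ_ne
      (fun I => a I - ∑ j, γ j * (vtx J dd uu I j * z j - ρ * z j)) :=
    fun γ => S15.weak_duality a q hq.1 hq.2.1 hq.2.2 γ
  have hbdd : BddBelow (Set.range fun γ : Fin J → ℝ =>
      ⨆ ξ : { ξ : Fin J → ℝ // ∀ j, ξ j ∈ Set.Icc (dd j) (uu j) },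
        (f (fun j => ξ.1 j * z j) - ∑ j, γ j * (ξ.1 j * z j - ρ * z j))) := by
    refine ⟨∑ I, q I * a I, ?_⟩
    rintro x ⟨γ, rfl⟩
    show ∑ I, q I * a I ≤
      ⨆ ξ : { ξ : Fin J → ℝ // ∀ j, ξ j ∈ Set.Icc (dd j) (uu j) },
        (f (fun j => ξ.1 j * z j) - ∑ j, γ j * (ξ.1 j * z j - ρ * z j))
    rw [hsup γ]
    exact hwq γ
  have hBopM : Bop J ρ dd uu f z = ∑ I, pstar I * a I := by
    apply le_antisymm
    · refine le_of_forall_pos_lt_add fun ε hε => ?_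
      have hε2 : (0 : ℝ) < ε / 2 := by linarith
      obtain ⟨γε, hγε⟩ := S15.dual_eps hdne hz a pstar hpstar hmax hε2
      have h1 : Bop J ρ dd uu f z ≤
          ⨆ ξ : { ξ : Fin J → ℝ // ∀ j, ξ j ∈ Set.Icc (dd j) (uu j) },
            (f (fun j => ξ.1 j * z j) - ∑ j, γε j * (ξ.1 j * z j - ρ * z j)) :=
        ciInf_le hbdd γε
      rw [hsup γε] at h1
      have h2 : Finset.univ.sup' S15.univ_ne
          (fun I => a I - ∑ j, γε j * (vtx J dd uu I j * z j - ρ * z j))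
          ≤ (∑ I, pstar I * a I) + ε / 2 :=
        Finset.sup'_le _ _ fun I _ => hγε I
      calc Bop J ρ dd uu f z ≤ (∑ I, pstar I * a I) + ε / 2 := h1.trans h2
        _ < (∑ I, pstar I * a I) + ε := by linarith
    · refine le_ciInf fun γ => ?_
      rw [hsup γ]
      calc (∑ I, pstar I * a I) = ∑ I, q I * a I := hqM.symm
        _ ≤ _ := hwq γ
  constructor
  · refine ⟨Ω, hqcard', ?_, q, hq.1, hqΩ, hq.2.1, hq.2.2, ?_⟩
    · exact S15.interior_mem hgen Ω hqcard' q hq.1 hqΩ hqsupp hq.2.1 hq.2.2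
    · rw [hBopM, ← hqM]
  · rintro y ⟨Ω', hcard', hint', p, hp0, hpΩ', hp1, hpV, rfl⟩
    refine le_ciInf fun γ => ?_
    rw [hsup γ]
    exact S15.weak_duality a p hp0 hp1 hpV γ
end
end

section
/- Let J = 2, let 0 < d_i < ρ < u_i for i = 1,2, and let f : ℝ_+² → ℝ be convex and sub-modular. Set κ = 1 − (ρ−d₁)/(u₁−d₁) − (ρ−d₂)/(u₂−d₂). If κ ≥ 0, then the reduced Bellman operator (𝓑f)(z₁,z₂) = min_{γ∈ℝ²} max_{ξ_i∈[d_i,u_i]} [f(ξ₁z₁,ξ₂z₂) − γ¹z₁(ξ₁−ρ) − γ²z₂(ξ₂−ρ)] equals ((ρ−d₁)/(u₁−d₁)) f(u₁z₁,d₂z₂) + ((ρ−d₂)/(u₂−d₂)) f(d₁z₁,u₂z₂) + κ f(d₁z₁,d₂z₂), with optimal strategy γ¹ = (f(u₁z₁,d₂z₂)−f(d₁z₁,d₂z₂))/(z₁(u₁−d₁)), γ² = (f(d₁z₁,u₂z₂)−f(d₁z₁,d₂z₂))/(z₂(u₂−d₂)). If κ ≤ 0, then (𝓑f)(z₁,z₂)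 = ((u₁−ρ)/(u₁−d₁)) f(d₁z₁,u₂z₂) + ((u₂−ρ)/(u₂−d₂)) f(u₁z₁,d₂z₂) + |κ| f(u₁z₁,u₂z₂), with γ¹ = (f(u₁z₁,u₂z₂)−f(d₁z₁,u₂z₂))/(z₁(u₁−d₁)), γ² = (f(u₁z₁,u₂z₂)−f(u₁z₁,d₂z₂))/(z₂(u₂−d₂)). -/
noncomputable section

lemma aux_conv (f : ℝ × ℝ → ℝ)
    (hconv : ConvexOn ℝ (Set.Ici (0 : ℝ) ×ˢ Set.Ici (0 : ℝ)) f)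
    (d₁ d₂ u₁ u₂ z₁ z₂ s t : ℝ)
    (hd₁ : 0 < d₁) (hd₂ : 0 < d₂) (h1 : d₁ < u₁) (h2 : d₂ < u₂)
    (hz₁ : 0 < z₁) (hz₂ : 0 < z₂)
    (hs0 : 0 ≤ s) (hs1 : s ≤ 1) (ht0 : 0 ≤ t) (ht1 : t ≤ 1) :
    f ((s*u₁+(1-s)*d₁)*z₁, (t*u₂+(1-t)*d₂)*z₂) ≤
      s*t*f (u₁*z₁, u₂*z₂) + s*(1-t)*f (u₁*z₁, d₂*z₂) +
      (1-s)*t*f (d₁*z₁, u₂*z₂) + (1-s)*(1-t)*f (d₁*z₁, d₂*z₂) := by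
  have hu₁ : 0 < u₁ := hd₁.trans h1
  have hu₂ : 0 < u₂ := hd₂.trans h2
  have hY : 0 < t*u₂+(1-t)*d₂ := by nlinarith
  have hmem : ∀ a b : ℝ, 0 ≤ a → 0 ≤ b →
      (a, b) ∈ Set.Ici (0:ℝ) ×ˢ Set.Ici (0:ℝ) := fun a b ha hb => ⟨ha, hb⟩
  have step1 : f ((s*u₁+(1-s)*d₁)*z₁, (t*u₂+(1-t)*d₂)*z₂) ≤
      s * f (u₁*z₁, (t*u₂+(1-t)*d₂)*z₂) + (1-s) * f (d₁*z₁, (t*u₂+(1-t)*d₂)*z₂) := by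
    have h := hconv.2 (hmem (u₁*z₁) ((t*u₂+(1-t)*d₂)*z₂)
        (by positivity) (le_of_lt (mul_pos hY hz₂)))
      (hmem (d₁*z₁) ((t*u₂+(1-t)*d₂)*z₂) (by positivity) (le_of_lt (mul_pos hY hz₂)))
      hs0 (by linarith : (0:ℝ) ≤ 1 - s) (by ring)
    have heq : s • ((u₁*z₁ : ℝ), (t*u₂+(1-t)*d₂)*z₂) + (1-s) • ((d₁*z₁ : ℝ), (t*u₂+(1-t)*d₂)*z₂)
        = ((s*u₁+(1-s)*d₁)*z₁, (t*u₂+(1-t)*d₂)*z₂) := by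
      simp [Prod.ext_iff, smul_eq_mul]
      constructor <;> ring
    rw [heq] at h
    exact h
  have step2 : f (u₁*z₁, (t*u₂+(1-t)*d₂)*z₂) ≤ t * f (u₁*z₁, u₂*z₂) + (1-t) * f (u₁*z₁, d₂*z₂) := by
    have h := hconv.2 (hmem (u₁*z₁) (u₂*z₂) (by positivity) (by positivity))
      (hmem (u₁*z₁) (d₂*z₂) (by positivity) (by positivity))
      ht0 (by linarith : (0:ℝ) ≤ 1 - t) (by ring)
    have heq : t • ((u₁*z₁ : ℝ), u₂*z₂) + (1-t) • ((u₁*z₁ : ℝ), d₂*z₂)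
        = ((u₁*z₁ : ℝ), (t*u₂+(1-t)*d₂)*z₂) := by
      simp [Prod.ext_iff, smul_eq_mul]
      constructor <;> ring
    rw [heq] at h
    exact h
  have step3 : f (d₁*z₁, (t*u₂+(1-t)*d₂)*z₂) ≤ t * f (d₁*z₁, u₂*z₂) + (1-t) * f (d₁*z₁, d₂*z₂) := by
    have h := hconv.2 (hmem (d₁*z₁) (u₂*z₂) (by positivity) (by positivity))
      (hmem (d₁*z₁) (d₂*z₂) (by positivity) (by positivity))
      ht0 (by linarith : (0:ℝ) ≤ 1 - t) (by ring)
    have heq : t • ((d₁*z₁ : ℝ), u₂*z₂) + (1-t) • ((d₁*z₁ : ℝ), d₂*z₂)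
        = ((d₁*z₁ : ℝ), (t*u₂+(1-t)*d₂)*z₂) := by
      simp [Prod.ext_iff, smul_eq_mul]
      constructor <;> ring
    rw [heq] at h
    exact h
  have p2 := mul_le_mul_of_nonneg_left step2 hs0
  have p3 := mul_le_mul_of_nonneg_left step3 (by linarith : (0:ℝ) ≤ 1 - s)
  nlinarith [p2, p3, step1]

lemma aux_bound (f : ℝ × ℝ → ℝ)
    (hconv : ConvexOn ℝ (Set.Ici (0 : ℝ) ×ˢ Set.Ici (0 : ℝ)) f)
    (ρ d₁ d₂ u₁ u₂ z₁ z₂ γ₁ γ₂ M x y : ℝ)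
    (hd₁ : 0 < d₁) (hd₂ : 0 < d₂) (h1 : d₁ < u₁) (h2 : d₂ < u₂)
    (hz₁ : 0 < z₁) (hz₂ : 0 < z₂)
    (hx : x ∈ Set.Icc d₁ u₁) (hy : y ∈ Set.Icc d₂ u₂)
    (hUU : f (u₁*z₁, u₂*z₂) - γ₁*z₁*(u₁-ρ) - γ₂*z₂*(u₂-ρ) ≤ M)
    (hUD : f (u₁*z₁, d₂*z₂) - γ₁*z₁*(u₁-ρ) - γ₂*z₂*(d₂-ρ) ≤ M)
    (hDU : f (d₁*z₁, u₂*z₂) - γ₁*z₁*(d₁-ρ) - γ₂*z₂*(u₂-ρ) ≤ M)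
    (hDD : f (d₁*z₁, d₂*z₂) - γ₁*z₁*(d₁-ρ) - γ₂*z₂*(d₂-ρ) ≤ M) :
    f (x*z₁, y*z₂) - γ₁*z₁*(x-ρ) - γ₂*z₂*(y-ρ) ≤ M := by
  have hud₁ : 0 < u₁ - d₁ := by linarith
  have hud₂ : 0 < u₂ - d₂ := by linarith
  set s := (x-d₁)/(u₁-d₁) with hsdef
  set t := (y-d₂)/(u₂-d₂) with htdef
  have hs0 : 0 ≤ s := div_nonneg (by linarith [hx.1]) hud₁.le
  have hs1 : s ≤ 1 := by rw [hsdef, div_le_one hud₁]; linarith [hx.2]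
  have ht0 : 0 ≤ t := div_nonneg (by linarith [hy.1]) hud₂.le
  have ht1 : t ≤ 1 := by rw [htdef, div_le_one hud₂]; linarith [hy.2]
  have hxe : x = s*u₁+(1-s)*d₁ := by
    rw [hsdef]; field_simp; ring
  have hye : y = t*u₂+(1-t)*d₂ := by
    rw [htdef]; field_simp; ring
  have hb := aux_conv f hconv d₁ d₂ u₁ u₂ z₁ z₂ s t hd₁ hd₂ h1 h2 hz₁ hz₂ hs0 hs1 ht0 ht1
  rw [hxe, hye]
  have p1 := mul_le_mul_of_nonneg_left hUU (mul_nonneg hs0 ht0)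
  have p2 := mul_le_mul_of_nonneg_left hUD (mul_nonneg hs0 (by linarith : (0:ℝ) ≤ 1 - t))
  have p3 := mul_le_mul_of_nonneg_left hDU (mul_nonneg (by linarith : (0:ℝ) ≤ 1 - s) ht0)
  have p4 := mul_le_mul_of_nonneg_left hDD
    (mul_nonneg (by linarith : (0:ℝ) ≤ 1 - s) (by linarith : (0:ℝ) ≤ 1 - t))
  nlinarith [hb, p1, p2, p3, p4]

set_option maxHeartbeats 2000000 in
theorem stmt16 (ρ d₁ d₂ u₁ u₂ : ℝ)
    (hd₁ : 0 < d₁) (hd₂ : 0 < d₂) (h₁ : d₁ < ρ) (h₂ : d₂ < ρ)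
    (h₃ : ρ < u₁) (h₄ : ρ < u₂)
    (f : ℝ × ℝ → ℝ)
    (hconv : ConvexOn ℝ (Set.Ici (0 : ℝ) ×ˢ Set.Ici (0 : ℝ)) f)
    -- f is sub-modular
    (hsub : ∀ x₁ y₁ x₂ y₂ : ℝ, 0 ≤ x₁ → x₁ ≤ y₁ → 0 ≤ x₂ → x₂ ≤ y₂ →
      f (x₁, x₂) + f (y₁, y₂) ≤ f (x₁, y₂) + f (y₁, x₂))
    (z₁ z₂ : ℝ) (hz₁ : 0 < z₁) (hz₂ : 0 < z₂) :
    let F : ℝ × ℝ → ℝ := fun γ =>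
      ⨆ ξ : { ξ : ℝ × ℝ // ξ.1 ∈ Set.Icc d₁ u₁ ∧ ξ.2 ∈ Set.Icc d₂ u₂ },
        (f (ξ.1.1 * z₁, ξ.1.2 * z₂) - γ.1 * z₁ * (ξ.1.1 - ρ) - γ.2 * z₂ * (ξ.1.2 - ρ))
    let κ : ℝ := 1 - (ρ - d₁) / (u₁ - d₁) - (ρ - d₂) / (u₂ - d₂)
    -- case κ ≥ 0
    (0 ≤ κ →
      (IsLeast (Set.range F)
        (((ρ - d₁) / (u₁ - d₁)) * f (u₁ * z₁, d₂ * z₂) +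
         ((ρ - d₂) / (u₂ - d₂)) * f (d₁ * z₁, u₂ * z₂) + κ * f (d₁ * z₁, d₂ * z₂)) ∧
       F ((f (u₁ * z₁, d₂ * z₂) - f (d₁ * z₁, d₂ * z₂)) / (z₁ * (u₁ - d₁)),
          (f (d₁ * z₁, u₂ * z₂) - f (d₁ * z₁, d₂ * z₂)) / (z₂ * (u₂ - d₂))) =
        ((ρ - d₁) / (u₁ - d₁)) * f (u₁ * z₁, d₂ * z₂) +
         ((ρ - d₂) / (u₂ - d₂)) * f (d₁ * z₁, u₂ * z₂) + κ * f (d₁ * z₁, d₂ * z₂))) ∧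
    -- case κ ≤ 0
    (κ ≤ 0 →
      (IsLeast (Set.range F)
        (((u₁ - ρ) / (u₁ - d₁)) * f (d₁ * z₁, u₂ * z₂) +
         ((u₂ - ρ) / (u₂ - d₂)) * f (u₁ * z₁, d₂ * z₂) + |κ| * f (u₁ * z₁, u₂ * z₂)) ∧
       F ((f (u₁ * z₁, u₂ * z₂) - f (d₁ * z₁, u₂ * z₂)) / (z₁ * (u₁ - d₁)),
          (f (u₁ * z₁, u₂ * z₂) - f (u₁ * z₁, d₂ * z₂)) / (z₂ * (u₂ - d₂))) =
        ((u₁ - ρ) / (u₁ - d₁)) * f (d₁ * z₁, u₂ * z₂) +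
         ((u₂ - ρ) / (u₂ - d₂)) * f (u₁ * z₁, d₂ * z₂) + |κ| * f (u₁ * z₁, u₂ * z₂))) := by
  intro F κ
  have hud₁ : 0 < u₁ - d₁ := by linarith
  have hud₂ : 0 < u₂ - d₂ := by linarith
  have hd₁u : d₁ < u₁ := by linarith
  have hd₂u : d₂ < u₂ := by linarith
  have hκeq : κ = 1 - (ρ - d₁) / (u₁ - d₁) - (ρ - d₂) / (u₂ - d₂) := rfl
  haveI hne : Nonempty {ξ : ℝ × ℝ // ξ.1 ∈ Set.Icc d₁ u₁ ∧ ξ.2 ∈ Set.Icc d₂ u₂} :=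
    ⟨⟨(d₁, d₂), ⟨⟨le_refl _, hd₁u.le⟩, ⟨le_refl _, hd₂u.le⟩⟩⟩⟩
  have m1 : u₁ ∈ Set.Icc d₁ u₁ := ⟨hd₁u.le, le_refl _⟩
  have m1' : d₁ ∈ Set.Icc d₁ u₁ := ⟨le_refl _, hd₁u.le⟩
  have m2 : u₂ ∈ Set.Icc d₂ u₂ := ⟨hd₂u.le, le_refl _⟩
  have m2' : d₂ ∈ Set.Icc d₂ u₂ := ⟨le_refl _, hd₂u.le⟩
  have hbdd : ∀ γ : ℝ × ℝ, BddAbove (Set.range fun ξ : {ξ : ℝ × ℝ // ξ.1 ∈ Set.Icc d₁ u₁ ∧ ξ.2 ∈ Set.Icc d₂ u₂} =>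
      f (ξ.1.1 * z₁, ξ.1.2 * z₂) - γ.1 * z₁ * (ξ.1.1 - ρ) - γ.2 * z₂ * (ξ.1.2 - ρ)) := by
    intro γ
    refine ⟨max (max (f (u₁*z₁, u₂*z₂) - γ.1*z₁*(u₁-ρ) - γ.2*z₂*(u₂-ρ))
        (f (u₁*z₁, d₂*z₂) - γ.1*z₁*(u₁-ρ) - γ.2*z₂*(d₂-ρ)))
        (max (f (d₁*z₁, u₂*z₂) - γ.1*z₁*(d₁-ρ) - γ.2*z₂*(u₂-ρ))
        (f (d₁*z₁, d₂*z₂) - γ.1*z₁*(d₁-ρ) - γ.2*z₂*(d₂-ρ))), ?_⟩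
    rintro v ⟨ξ, rfl⟩
    exact aux_bound f hconv ρ d₁ d₂ u₁ u₂ z₁ z₂ γ.1 γ.2 _ ξ.1.1 ξ.1.2
      hd₁ hd₂ hd₁u hd₂u hz₁ hz₂ ξ.2.1 ξ.2.2
      (le_trans (le_max_left _ _) (le_max_left _ _))
      (le_trans (le_max_right _ _) (le_max_left _ _))
      (le_trans (le_max_left _ _) (le_max_right _ _))
      (le_trans (le_max_right _ _) (le_max_right _ _))
  have hle : ∀ (γ₁ γ₂ x y : ℝ), x ∈ Set.Icc d₁ u₁ → y ∈ Set.Icc d₂ u₂ →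
      f (x*z₁, y*z₂) - γ₁*z₁*(x-ρ) - γ₂*z₂*(y-ρ) ≤ F (γ₁, γ₂) := by
    intro γ₁ γ₂ x y hx hy
    exact le_ciSup (hbdd (γ₁, γ₂)) ⟨(x, y), hx, hy⟩
  have hsup_le : ∀ (γ₁ γ₂ M : ℝ),
      (f (u₁*z₁, u₂*z₂) - γ₁*z₁*(u₁-ρ) - γ₂*z₂*(u₂-ρ) ≤ M) →
      (f (u₁*z₁, d₂*z₂) - γ₁*z₁*(u₁-ρ) - γ₂*z₂*(d₂-ρ) ≤ M) →
      (f (d₁*z₁, u₂*z₂) - γ₁*z₁*(d₁-ρ) - γ₂*z₂*(u₂-ρ) ≤ M) →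
      (f (d₁*z₁, d₂*z₂) - γ₁*z₁*(d₁-ρ) - γ₂*z₂*(d₂-ρ) ≤ M) →
      F (γ₁, γ₂) ≤ M := by
    intro γ₁ γ₂ M hUU hUD hDU hDD
    exact ciSup_le fun ξ => aux_bound f hconv ρ d₁ d₂ u₁ u₂ z₁ z₂ γ₁ γ₂ M ξ.1.1 ξ.1.2
      hd₁ hd₂ hd₁u hd₂u hz₁ hz₂ ξ.2.1 ξ.2.2 hUU hUD hDU hDD
  have hsubm : f (d₁*z₁, d₂*z₂) + f (u₁*z₁, u₂*z₂) ≤ f (d₁*z₁, u₂*z₂) + f (u₁*z₁, d₂*z₂) :=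
    hsub (d₁*z₁) (u₁*z₁) (d₂*z₂) (u₂*z₂) (by positivity)
      (by nlinarith) (by positivity) (by nlinarith)
  have hL1e : (ρ - d₁) / (u₁ - d₁) * (u₁ - d₁) = ρ - d₁ := div_mul_cancel₀ _ hud₁.ne'
  have hL2e : (ρ - d₂) / (u₂ - d₂) * (u₂ - d₂) = ρ - d₂ := div_mul_cancel₀ _ hud₂.ne'
  have hL1pos : 0 < (ρ - d₁) / (u₁ - d₁) := div_pos (by linarith) hud₁
  have hL2pos : 0 < (ρ - d₂) / (u₂ - d₂) := div_pos (by linarith) hud₂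
  have hL1lt : (ρ - d₁) / (u₁ - d₁) < 1 := by rw [div_lt_one hud₁]; linarith
  have hL2lt : (ρ - d₂) / (u₂ - d₂) < 1 := by rw [div_lt_one hud₂]; linarith
  have hN1e : (u₁ - ρ) / (u₁ - d₁) = 1 - (ρ - d₁) / (u₁ - d₁) := by field_simp; ring
  have hN2e : (u₂ - ρ) / (u₂ - d₂) = 1 - (ρ - d₂) / (u₂ - d₂) := by field_simp; ring
  constructor
  · -- case 0 ≤ κ
    intro hκ0
    have hκ0' : 0 ≤ 1 - (ρ - d₁) / (u₁ - d₁) - (ρ - d₂) / (u₂ - d₂) := hκeq ▸ hκ0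
    -- corner values at the optimal γ
    have ea : (f (u₁*z₁, d₂*z₂) - f (d₁*z₁, d₂*z₂)) / (z₁*(u₁-d₁)) * z₁ * (u₁-ρ)
        = (f (u₁*z₁, d₂*z₂) - f (d₁*z₁, d₂*z₂)) * (1 - (ρ-d₁)/(u₁-d₁)) := by
      field_simp; ring
    have eb : (f (u₁*z₁, d₂*z₂) - f (d₁*z₁, d₂*z₂)) / (z₁*(u₁-d₁)) * z₁ * (d₁-ρ)
        = -((f (u₁*z₁, d₂*z₂) - f (d₁*z₁, d₂*z₂)) * ((ρ-d₁)/(u₁-d₁))) := by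
      field_simp; ring
    have ec : (f (d₁*z₁, u₂*z₂) - f (d₁*z₁, d₂*z₂)) / (z₂*(u₂-d₂)) * z₂ * (u₂-ρ)
        = (f (d₁*z₁, u₂*z₂) - f (d₁*z₁, d₂*z₂)) * (1 - (ρ-d₂)/(u₂-d₂)) := by
      field_simp; ring
    have ed : (f (d₁*z₁, u₂*z₂) - f (d₁*z₁, d₂*z₂)) / (z₂*(u₂-d₂)) * z₂ * (d₂-ρ)
        = -((f (d₁*z₁, u₂*z₂) - f (d₁*z₁, d₂*z₂)) * ((ρ-d₂)/(u₂-d₂))) := by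
      field_simp; ring
    have hFeq : F ((f (u₁ * z₁, d₂ * z₂) - f (d₁ * z₁, d₂ * z₂)) / (z₁ * (u₁ - d₁)),
          (f (d₁ * z₁, u₂ * z₂) - f (d₁ * z₁, d₂ * z₂)) / (z₂ * (u₂ - d₂))) =
        ((ρ - d₁) / (u₁ - d₁)) * f (u₁ * z₁, d₂ * z₂) +
         ((ρ - d₂) / (u₂ - d₂)) * f (d₁ * z₁, u₂ * z₂) + κ * f (d₁ * z₁, d₂ * z₂) := by
      rw [hκeq]
      apply le_antisymm
      · apply hsup_le
        · rw [ea, ec]; linarith [hsubm]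
        · rw [ea, ed]; ring_nf; linarith [hsubm]
        · rw [eb, ec]; ring_nf; linarith [hsubm]
        · rw [eb, ed]; ring_nf; linarith [hsubm]
      · have h := hle ((f (u₁*z₁, d₂*z₂) - f (d₁*z₁, d₂*z₂)) / (z₁*(u₁-d₁)))
          ((f (d₁*z₁, u₂*z₂) - f (d₁*z₁, d₂*z₂)) / (z₂*(u₂-d₂))) d₁ d₂ m1' m2'
        rw [eb, ed] at h
        linarith [h]
    refine ⟨⟨⟨_, hFeq⟩, ?_⟩, hFeq⟩
    rintro v ⟨γ, rfl⟩
    have t1 := hle γ.1 γ.2 u₁ d₂ m1 m2'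
    have t2 := hle γ.1 γ.2 d₁ u₂ m1' m2
    have t3 := hle γ.1 γ.2 d₁ d₂ m1' m2'
    rw [Prod.mk.eta] at t1 t2 t3
    have w1 := mul_le_mul_of_nonneg_left t1 hL1pos.le
    have w2 := mul_le_mul_of_nonneg_left t2 hL2pos.le
    have w3 := mul_le_mul_of_nonneg_left t3 hκ0'
    have q1 : γ.1*z₁*((ρ - d₁) / (u₁ - d₁)*(u₁-d₁)) = γ.1*z₁*(ρ-d₁) := by rw [hL1e]
    have q2 : γ.2*z₂*((ρ - d₂) / (u₂ - d₂)*(u₂-d₂)) = γ.2*z₂*(ρ-d₂) := by rw [hL2e]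
    have q3 : ((ρ - d₁) / (u₁ - d₁)) * F γ + ((ρ - d₂) / (u₂ - d₂)) * F γ +
        (1 - (ρ - d₁) / (u₁ - d₁) - (ρ - d₂) / (u₂ - d₂)) * F γ = F γ := by ring
    rw [hκeq]
    linarith [w1, w2, w3, q1, q2, q3]
  · -- case κ ≤ 0
    intro hκ0
    have hκ0' : 0 ≤ (ρ - d₁) / (u₁ - d₁) + (ρ - d₂) / (u₂ - d₂) - 1 := by
      rw [hκeq] at hκ0; linarith
    have habs : |κ| = (ρ - d₁) / (u₁ - d₁) + (ρ - d₂) / (u₂ - d₂) - 1 := by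
      rw [abs_of_nonpos hκ0, hκeq]; ring
    have ea : (f (u₁*z₁, u₂*z₂) - f (d₁*z₁, u₂*z₂)) / (z₁*(u₁-d₁)) * z₁ * (u₁-ρ)
        = (f (u₁*z₁, u₂*z₂) - f (d₁*z₁, u₂*z₂)) * (1 - (ρ-d₁)/(u₁-d₁)) := by
      field_simp; ring
    have eb : (f (u₁*z₁, u₂*z₂) - f (d₁*z₁, u₂*z₂)) / (z₁*(u₁-d₁)) * z₁ * (d₁-ρ)
        = -((f (u₁*z₁, u₂*z₂) - f (d₁*z₁, u₂*z₂)) * ((ρ-d₁)/(u₁-d₁))) := by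
      field_simp; ring
    have ec : (f (u₁*z₁, u₂*z₂) - f (u₁*z₁, d₂*z₂)) / (z₂*(u₂-d₂)) * z₂ * (u₂-ρ)
        = (f (u₁*z₁, u₂*z₂) - f (u₁*z₁, d₂*z₂)) * (1 - (ρ-d₂)/(u₂-d₂)) := by
      field_simp; ring
    have ed : (f (u₁*z₁, u₂*z₂) - f (u₁*z₁, d₂*z₂)) / (z₂*(u₂-d₂)) * z₂ * (d₂-ρ)
        = -((f (u₁*z₁, u₂*z₂) - f (u₁*z₁, d₂*z₂)) * ((ρ-d₂)/(u₂-d₂))) := by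
      field_simp; ring
    have hFeq : F ((f (u₁ * z₁, u₂ * z₂) - f (d₁ * z₁, u₂ * z₂)) / (z₁ * (u₁ - d₁)),
          (f (u₁ * z₁, u₂ * z₂) - f (u₁ * z₁, d₂ * z₂)) / (z₂ * (u₂ - d₂))) =
        ((u₁ - ρ) / (u₁ - d₁)) * f (d₁ * z₁, u₂ * z₂) +
         ((u₂ - ρ) / (u₂ - d₂)) * f (u₁ * z₁, d₂ * z₂) + |κ| * f (u₁ * z₁, u₂ * z₂) := by
      rw [habs, hN1e, hN2e]
      apply le_antisymm
      · apply hsup_le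
        · rw [ea, ec]; ring_nf; linarith [hsubm]
        · rw [ea, ed]; ring_nf; linarith [hsubm]
        · rw [eb, ec]; ring_nf; linarith [hsubm]
        · rw [eb, ed]; linarith [hsubm]
      · have h := hle ((f (u₁*z₁, u₂*z₂) - f (d₁*z₁, u₂*z₂)) / (z₁*(u₁-d₁)))
          ((f (u₁*z₁, u₂*z₂) - f (u₁*z₁, d₂*z₂)) / (z₂*(u₂-d₂))) u₁ u₂ m1 m2
        rw [ea, ec] at h
        linarith [h]
    refine ⟨⟨⟨_, hFeq⟩, ?_⟩, hFeq⟩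
    rintro v ⟨γ, rfl⟩
    have t1 := hle γ.1 γ.2 d₁ u₂ m1' m2
    have t2 := hle γ.1 γ.2 u₁ d₂ m1 m2'
    have t3 := hle γ.1 γ.2 u₁ u₂ m1 m2
    rw [Prod.mk.eta] at t1 t2 t3
    have w1 := mul_le_mul_of_nonneg_left t1 (by linarith [hL1lt] : (0:ℝ) ≤ 1 - (ρ - d₁) / (u₁ - d₁))
    have w2 := mul_le_mul_of_nonneg_left t2 (by linarith [hL2lt] : (0:ℝ) ≤ 1 - (ρ - d₂) / (u₂ - d₂))
    have w3 := mul_le_mul_of_nonneg_left t3 hκ0'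
    have q1 : γ.1*z₁*((ρ - d₁) / (u₁ - d₁)*(u₁-d₁)) = γ.1*z₁*(ρ-d₁) := by rw [hL1e]
    have q2 : γ.2*z₂*((ρ - d₂) / (u₂ - d₂)*(u₂-d₂)) = γ.2*z₂*(ρ-d₂) := by rw [hL2e]
    have q3 : (1 - (ρ - d₁) / (u₁ - d₁)) * F γ + (1 - (ρ - d₂) / (u₂ - d₂)) * F γ +
        ((ρ - d₁) / (u₁ - d₁) + (ρ - d₂) / (u₂ - d₂) - 1) * F γ = F γ := by ring
    rw [habs, hN1e, hN2e]
    linarith [w1, w2, w3, q1, q2, q3]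
end
end
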